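/- arXiv:math/0507369 — 4 statements merged into one kernel-verified Lean document; each statement's English description precedes it below -/
import Mathlib

section
/- Let l ≤ k be positive integers, let f be a dimension function such that g(r) := r^{-l} f(r) is also a dimension function, let A ⊆ ℝ^k be a Borel set with finite Hausdorff f-measure, and let φ : A → ℝ^l be a Lipschitz map. Then the upper integral over y ∈ ℝ^l of H^g(A ∩ φ^{-1}{y}) with respect to l-dimensional Lebesgue measure is at most α(l) · 2^l · Lip(φ)^l · H^f(A), where α(l) is the volume of the l-dimensional unit ball. -/
open MeasureTheory Set Filter
open scoped ENNReal NNReal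

def IsDimFun (f : ℝ → ℝ) : Prop :=
  ContinuousOn f (Set.Ici 0) ∧ MonotoneOn f (Set.Ici 0) ∧
    (∀ r, 0 ≤ r → 0 ≤ f r) ∧ Filter.Tendsto f (nhdsWithin 0 (Set.Ioi 0)) (nhds 0)

noncomputable def hMeasure {X : Type*} [EMetricSpace X] [MeasurableSpace X] [BorelSpace X]
    (f : ℝ → ℝ) : Measure X :=
  Measure.mkMetric (fun d => ENNReal.ofReal (f d.toReal))

/-- The upper integral of a (not necessarily measurable) function. -/
noncomputable def upperLintegral {α : Type*} [MeasurableSpace α] (μ : Measure α)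
    (f : α → ℝ≥0∞) : ℝ≥0∞ :=
  ⨅ (g : α → ℝ≥0∞) (_ : Measurable g) (_ : f ≤ g), ∫⁻ x, g x ∂μ

theorem stmt1 {k l : ℕ} (hl : 0 < l) (hlk : l ≤ k) (f g : ℝ → ℝ)
    (hf : IsDimFun f) (hg : IsDimFun g)
    (hgdef : ∀ r > (0:ℝ), g r = f r / r ^ l)
    (A : Set (EuclideanSpace ℝ (Fin k))) (hA : MeasurableSet A)
    (hAfin : hMeasure f A ≠ ⊤)
    (φ : EuclideanSpace ℝ (Fin k) → EuclideanSpace ℝ (Fin l)) (K : ℝ≥0)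
    (hφ : LipschitzOnWith K φ A) :
    upperLintegral volume (fun y => hMeasure g (A ∩ φ ⁻¹' {y})) ≤
      volume (Metric.closedBall (0 : EuclideanSpace ℝ (Fin l)) 1) * 2 ^ l *
        (K : ℝ≥0∞) ^ l * hMeasure f A := by
  classical
  set α : ℝ≥0∞ := volume (Metric.closedBall (0 : EuclideanSpace ℝ (Fin l)) 1) with hα
  have hαfin : α ≠ ⊤ := (measure_closedBall_lt_top).ne
  set c : ℝ≥0∞ := α * (K : ℝ≥0∞) ^ l with hc
  have hcfin : c ≠ ⊤ :=
    ENNReal.mul_ne_top hαfin (ENNReal.pow_ne_top ENNReal.coe_ne_top)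
  set L : ℝ≥0∞ := upperLintegral volume (fun y => hMeasure g (A ∩ φ ⁻¹' {y})) with hL
  -- main estimate with an ε of room
  have main : ∀ ε : ℝ≥0∞, 0 < ε → ε ≠ ⊤ → L ≤ c * (hMeasure f A + ε) := by
    intro ε hε hεtop
    -- choose good covers at all scales
    have hcov : ∀ n : ℕ, ∃ t : ℕ → Set (EuclideanSpace ℝ (Fin k)),
        A ⊆ ⋃ j, t j ∧ (∀ j, EMetric.diam (t j) ≤ ((n : ℝ≥0∞) + 1)⁻¹) ∧
        ∑' j, ⨆ _ : (t j).Nonempty,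
            ENNReal.ofReal (f (EMetric.diam (t j)).toReal) < hMeasure f A + ε := by
      intro n
      have hlt : (⨅ (t : ℕ → Set (EuclideanSpace ℝ (Fin k))) (_ : A ⊆ iUnion t)
          (_ : ∀ j, EMetric.diam (t j) ≤ ((n : ℝ≥0∞) + 1)⁻¹),
          ∑' j, ⨆ _ : (t j).Nonempty,
            ENNReal.ofReal (f (EMetric.diam (t j)).toReal)) < hMeasure f A + ε := by
        have hle : (⨅ (t : ℕ → Set (EuclideanSpace ℝ (Fin k))) (_ : A ⊆ iUnion t)
            (_ : ∀ j, EMetric.diam (t j) ≤ ((n : ℝ≥0∞) + 1)⁻¹),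
            ∑' j, ⨆ _ : (t j).Nonempty,
              ENNReal.ofReal (f (EMetric.diam (t j)).toReal)) ≤ hMeasure f A := by
          rw [hMeasure, Measure.mkMetric_apply]
          exact le_iSup₂ (f := fun r (_ : 0 < r) =>
            ⨅ (t : ℕ → Set (EuclideanSpace ℝ (Fin k))) (_ : A ⊆ iUnion t)
              (_ : ∀ j, EMetric.diam (t j) ≤ r),
              ∑' j, ⨆ _ : (t j).Nonempty,
                ENNReal.ofReal (f (EMetric.diam (t j)).toReal))
            (((n : ℝ≥0∞) + 1)⁻¹)
            (ENNReal.inv_pos.mpr (by simp))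
        exact lt_of_le_of_lt hle (ENNReal.lt_add_right hAfin hε.ne')
      obtain ⟨t, ht⟩ := iInf_lt_iff.mp hlt
      obtain ⟨h1, ht⟩ := iInf_lt_iff.mp ht
      obtain ⟨h2, ht⟩ := iInf_lt_iff.mp ht
      exact ⟨t, h1, h2, ht⟩
    choose t htcov htdiam htsum using hcov
    -- the auxiliary measurable majorants
    set F : ℕ → ℕ → Set (EuclideanSpace ℝ (Fin l)) :=
      fun n j => closure (φ '' (t n j ∩ A)) with hF
    set D : ℕ → ℕ → ℝ≥0∞ := fun n j => EMetric.diam (t n j) with hD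
    set h : ℕ → EuclideanSpace ℝ (Fin l) → ℝ≥0∞ := fun n y =>
      ∑' j, (F n j).indicator (fun _ => ENNReal.ofReal (g (D n j).toReal)) y with hh
    have hmeas : ∀ n, Measurable (h n) := fun n =>
      Measurable.ennreal_tsum fun j =>
        measurable_const.indicator isClosed_closure.measurableSet
    have hDfin : ∀ n j, D n j ≠ ⊤ := fun n j =>
      ((htdiam n j).trans_lt (ENNReal.inv_lt_top.mpr (zero_lt_one.trans_le le_add_self))).ne
    -- pointwise bound on fibers
    have hfiber : ∀ y, hMeasure g (A ∩ φ ⁻¹' {y}) ≤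
        ⨆ n, ⨅ m, ⨅ _ : n ≤ m, h m y := by
      intro y
      rw [hMeasure, Measure.mkMetric_apply]
      refine iSup₂_le fun r hr => ?_
      obtain ⟨n, hn⟩ : ∃ n : ℕ, ((n : ℝ≥0∞) + 1)⁻¹ ≤ r := by
        rcases ENNReal.exists_inv_nat_lt hr.ne' with ⟨n, hn⟩
        exact ⟨n, le_trans (by gcongr; exact le_self_add) hn.le⟩
      refine le_iSup_of_le n (le_iInf₂ fun m hm => ?_)
      -- use the cover t m intersected with the fiber
      set s : ℕ → Set (EuclideanSpace ℝ (Fin k)) := fun j => t m j ∩ (A ∩ φ ⁻¹' {y})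
        with hs
      calc (⨅ (u : ℕ → Set (EuclideanSpace ℝ (Fin k))) (_ : A ∩ φ ⁻¹' {y} ⊆ iUnion u)
            (_ : ∀ j, EMetric.diam (u j) ≤ r),
            ∑' j, ⨆ _ : (u j).Nonempty,
              ENNReal.ofReal (g (EMetric.diam (u j)).toReal)) ≤
          ∑' j, ⨆ _ : (s j).Nonempty,
              ENNReal.ofReal (g (EMetric.diam (s j)).toReal) := by
            refine iInf₂_le_of_le s ?_ (iInf_le_of_le ?_ le_rfl)
            · intro x hx
              rcases mem_iUnion.mp (htcov m hx.1) with ⟨j, hj⟩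
              exact mem_iUnion.mpr ⟨j, hj, hx⟩
            · intro j
              refine le_trans (EMetric.diam_mono inter_subset_left) ?_
              refine le_trans (htdiam m j) (le_trans ?_ hn)
              gcongr
        _ ≤ h m y := by
            refine ENNReal.tsum_le_tsum fun j => ?_
            rcases Set.eq_empty_or_nonempty (s j) with hsj | hsj
            · simp [hsj]
            rw [iSup_pos hsj]
            rcases hsj with ⟨x, hx⟩
            have hyF : y ∈ F m j :=
              subset_closure ⟨x, ⟨hx.1, hx.2.1⟩, hx.2.2⟩
            rw [Set.indicator_of_mem hyF]
            refine ENNReal.ofReal_le_ofReal ?_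
            refine hg.2.1 ENNReal.toReal_nonneg ENNReal.toReal_nonneg ?_
            exact ENNReal.toReal_mono (hDfin m j) (EMetric.diam_mono inter_subset_left)
    -- integral bound for each h m
    have hint : ∀ m, ∫⁻ y, h m y ≤ c * (hMeasure f A + ε) := by
      intro m
      have heq : ∫⁻ y, h m y =
          ∑' j, ENNReal.ofReal (g (D m j).toReal) * volume (F m j) := by
        rw [hh]
        rw [lintegral_tsum fun j =>
          (measurable_const.indicator isClosed_closure.measurableSet).aemeasurable]
        congr 1
        ext j
        exact lintegral_indicator_const isClosed_closure.measurableSet _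
      rw [heq]
      calc ∑' j, ENNReal.ofReal (g (D m j).toReal) * volume (F m j)
          ≤ ∑' j, c * ⨆ _ : (t m j).Nonempty,
              ENNReal.ofReal (f (D m j).toReal) := by
            refine ENNReal.tsum_le_tsum fun j => ?_
            rcases Set.eq_empty_or_nonempty (t m j ∩ A) with he | ⟨x0, hx0⟩
            · have : F m j = ∅ := by simp [hF, he]
              simp [this]
            have htne : (t m j).Nonempty := ⟨x0, hx0.1⟩
            rw [iSup_pos htne]
            -- volume bound via a closed ball
            have himg : F m j ⊆ Metric.closedBall (φ x0) ((K * D m j).toReal) := by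
              refine closure_minimal ?_ Metric.isClosed_closedBall
              rintro _ ⟨x, hx, rfl⟩
              rw [← Metric.emetric_closedBall ENNReal.toReal_nonneg,
                ENNReal.ofReal_toReal (ENNReal.mul_ne_top ENNReal.coe_ne_top (hDfin m j)),
                EMetric.mem_closedBall]
              exact le_trans (hφ hx.2 hx0.2)
                (mul_le_mul_right (EMetric.edist_le_diam_of_mem hx.1 hx0.1) _)
            have hvol : volume (F m j) ≤
                ENNReal.ofReal (((K * D m j).toReal) ^ l) * α := by
              refine le_trans (measure_mono himg) ?_
              rw [Measure.addHaar_closedBall' _ _ ENNReal.toReal_nonneg,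
                finrank_euclideanSpace_fin]
            set d : ℝ := (D m j).toReal with hd
            have hKd : (K * D m j).toReal = (K : ℝ) * d := by
              rw [ENNReal.toReal_mul, ENNReal.coe_toReal]
            rcases eq_or_lt_of_le (ENNReal.toReal_nonneg : (0:ℝ) ≤ d) with hd0 | hd0
            · -- diameter zero: the ball has measure zero
              have : ENNReal.ofReal (((K * D m j).toReal) ^ l) = 0 := by
                rw [hKd, hd, ← hd0, mul_zero, zero_pow hl.ne', ENNReal.ofReal_zero]
              calc ENNReal.ofReal (g d) * volume (F m j)
                  ≤ ENNReal.ofReal (g d) * (ENNReal.ofReal (((K * D m j).toReal) ^ l) * α) :=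
                    mul_le_mul_right hvol _
                _ = 0 := by rw [this, zero_mul, mul_zero]
                _ ≤ _ := zero_le
            · -- positive diameter
              have hgd : g d = f d / d ^ l := hgdef d hd0
              have hfd : 0 ≤ f d := hf.2.2.1 d hd0.le
              have hdl : (0:ℝ) < d ^ l := pow_pos hd0 l
              calc ENNReal.ofReal (g d) * volume (F m j)
                  ≤ ENNReal.ofReal (g d) * (ENNReal.ofReal (((K : ℝ) * d) ^ l) * α) := by
                    rw [← hKd]; exact mul_le_mul_right hvol _
                _ = ENNReal.ofReal (g d * ((K : ℝ) * d) ^ l) * α := by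
                    rw [ENNReal.ofReal_mul (by rw [hgd]; positivity), mul_assoc]
                _ = ENNReal.ofReal (f d * (K : ℝ) ^ l) * α := by
                    congr 1
                    rw [hgd, mul_pow]
                    field_simp
                _ = c * ENNReal.ofReal (f d) := by
                    rw [ENNReal.ofReal_mul hfd, hc]
                    rw [show ENNReal.ofReal ((K : ℝ) ^ l) = (K : ℝ≥0∞) ^ l by
                      rw [← ENNReal.ofReal_coe_nnreal, ← ENNReal.ofReal_pow K.coe_nonneg]]
                    ring
        _ = c * ∑' j, ⨆ _ : (t m j).Nonempty, ENNReal.ofReal (f (D m j).toReal) :=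
            ENNReal.tsum_mul_left
        _ ≤ c * (hMeasure f A + ε) := mul_le_mul_right (htsum m).le _
    -- put everything together with Fatou's lemma
    set hlim : EuclideanSpace ℝ (Fin l) → ℝ≥0∞ :=
      fun y => ⨆ n, ⨅ m, ⨅ _ : n ≤ m, h m y with hhlim
    have hmeaslim : Measurable hlim :=
      Measurable.iSup fun n => Measurable.iInf fun m => Measurable.iInf fun _ => hmeas m
    have hLle : L ≤ ∫⁻ y, hlim y := by
      rw [hL, upperLintegral]
      exact iInf_le_of_le hlim (iInf_le_of_le hmeaslim (iInf_le_of_le hfiber le_rfl))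
    refine le_trans hLle ?_
    have : ∫⁻ y, hlim y = ∫⁻ y, liminf (fun m => h m y) atTop := by
      simp only [hhlim, liminf_eq_iSup_iInf_of_nat]
    rw [this]
    refine le_trans (lintegral_liminf_le hmeas) ?_
    calc liminf (fun m => ∫⁻ y, h m y) atTop
        ≤ liminf (fun _ : ℕ => c * (hMeasure f A + ε)) atTop :=
          liminf_le_liminf (Eventually.of_forall hint)
      _ = c * (hMeasure f A + ε) := liminf_const _
  -- remove the ε
  have hmain : L ≤ c * hMeasure f A := by
    by_cases hc0 : c = 0
    · simpa [hc0] using main 1 one_pos ENNReal.one_ne_top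
    refine ENNReal.le_of_forall_pos_le_add fun ε' hε' _ => ?_
    have hδpos : 0 < (ε' : ℝ≥0∞) / c :=
      ENNReal.div_pos (by exact_mod_cast hε'.ne') hcfin
    have hδtop : (ε' : ℝ≥0∞) / c ≠ ⊤ := by
      simp [ENNReal.div_eq_top, hc0, ENNReal.coe_ne_top]
    calc L ≤ c * (hMeasure f A + (ε' : ℝ≥0∞) / c) := main _ hδpos hδtop
      _ = c * hMeasure f A + c * ((ε' : ℝ≥0∞) / c) := mul_add _ _ _
      _ ≤ c * hMeasure f A + ε' := add_le_add_right ENNReal.mul_div_le _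
  refine le_trans hmain ?_
  calc c * hMeasure f A = α * 1 * (K : ℝ≥0∞) ^ l * hMeasure f A := by rw [hc]; ring
    _ ≤ α * 2 ^ l * (K : ℝ≥0∞) ^ l * hMeasure f A := by
        gcongr
        exact one_le_pow_of_one_le' one_le_two l
end

section
/- Let l ≤ k be positive integers and let f and g(r) := r^{-l} f(r) be dimension functions. Let A ⊆ ℝ^k be a Borel set and V a (k−l)-dimensional linear subspace of ℝ^k. If there exists a subset S of V^⊥ of positive H^l-measure such that H^g(A ∩ (V + b)) = ∞ for all b ∈ S, then H^f(A) = ∞. -/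
open MeasureTheory Set Filter
open scoped ENNReal NNReal

/-- The scale-`r` pre-measure used in the definition of `hMeasure`. -/
noncomputable def IgAux {X : Type*} [EMetricSpace X] (g : ℝ → ℝ) (s : Set X) (r : ℝ≥0∞) :
    ℝ≥0∞ :=
  ⨅ (t : ℕ → Set X) (_ : s ⊆ ⋃ n, t n) (_ : ∀ n, EMetric.diam (t n) ≤ r),
    ∑' n, ⨆ _ : (t n).Nonempty, ENNReal.ofReal (g (EMetric.diam (t n)).toReal)

theorem hMeasure_eq_iSup {X : Type*} [EMetricSpace X] [MeasurableSpace X] [BorelSpace X]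
    (g : ℝ → ℝ) (s : Set X) :
    hMeasure g s = ⨆ (r : ℝ≥0∞) (_ : 0 < r), IgAux g s r := by
  rw [hMeasure, Measure.mkMetric_apply]
  rfl

theorem IgAux_anti {X : Type*} [EMetricSpace X] (g : ℝ → ℝ) (s : Set X) {r r' : ℝ≥0∞}
    (h : r' ≤ r) : IgAux g s r ≤ IgAux g s r' := by
  refine le_iInf fun t => le_iInf fun ht => le_iInf fun htd => ?_
  exact iInf_le_of_le t (iInf_le_of_le ht (iInf_le_of_le (fun n => (htd n).trans h) le_rfl))

theorem IgAux_le {X : Type*} [EMetricSpace X] (g : ℝ → ℝ) (s : Set X) (r : ℝ≥0∞)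
    (t : ℕ → Set X) (ht : s ⊆ ⋃ n, t n) (htd : ∀ n, EMetric.diam (t n) ≤ r) :
    IgAux g s r ≤ ∑' n, ⨆ _ : (t n).Nonempty, ENNReal.ofReal (g (EMetric.diam (t n)).toReal) :=
  iInf_le_of_le t (iInf_le_of_le ht (iInf_le_of_le htd le_rfl))

/-- Integration lemma: if `M ≤ ∑ cₙ 1_{Wₙ}` on `T` then `M * μ T ≤ ∑ cₙ μ(Wₙ)`. -/
theorem weighted_indicator_le {α : Type*} [MeasurableSpace α] (μ : Measure α)
    (c : ℕ → ℝ≥0∞) (W : ℕ → Set α) (T : Set α) (M : ℝ≥0∞)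
    (h : ∀ y ∈ T, M ≤ ∑' n, (W n).indicator (fun _ => c n) y) :
    M * μ T ≤ ∑' n, c n * μ (W n) := by
  set F := fun n => toMeasurable μ (W n) with hF
  have hFm : ∀ n, MeasurableSet (F n) := fun n => measurableSet_toMeasurable μ (W n)
  have hmeas : Measurable fun y => ∑' n, (F n).indicator (fun _ => c n) y :=
    Measurable.ennreal_tsum fun n => measurable_const.indicator (hFm n)
  set G := {y | M ≤ ∑' n, (F n).indicator (fun _ => c n) y} with hG
  have hGm : MeasurableSet G := measurableSet_le measurable_const hmeas
  have hTG : T ⊆ G := by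
    intro y hy
    refine (h y hy).trans (ENNReal.tsum_le_tsum fun n => ?_)
    exact indicator_le_indicator_of_subset (subset_toMeasurable μ (W n)) zero_le y
  calc M * μ T ≤ M * μ G := mul_le_mul_right (measure_mono hTG) M
    _ = ∫⁻ _ in G, M ∂μ := (setLIntegral_const G M).symm
    _ ≤ ∫⁻ y in G, ∑' n, (F n).indicator (fun _ => c n) y ∂μ :=
        setLIntegral_mono hmeas fun y hy => hy
    _ ≤ ∫⁻ y, ∑' n, (F n).indicator (fun _ => c n) y ∂μ := setLIntegral_le_lintegral G _
    _ = ∑' n, ∫⁻ y, (F n).indicator (fun _ => c n) y ∂μ :=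
        lintegral_tsum fun n => (measurable_const.indicator (hFm n)).aemeasurable
    _ = ∑' n, c n * μ (W n) := by
        refine tsum_congr fun n => ?_
        rw [lintegral_indicator_const (hFm n), measure_toMeasurable]

theorem stmt3 {k l : ℕ} (hl : 0 < l) (hlk : l ≤ k) (f g : ℝ → ℝ)
    (hf : IsDimFun f) (hg : IsDimFun g)
    (hgdef : ∀ r > (0:ℝ), g r = f r / r ^ l)
    (A : Set (EuclideanSpace ℝ (Fin k))) (hA : MeasurableSet A)
    (V : Submodule ℝ (EuclideanSpace ℝ (Fin k)))
    (hV : Module.finrank ℝ V = k - l)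
    (S : Set (EuclideanSpace ℝ (Fin k))) (hS : S ⊆ (Vᗮ : Set (EuclideanSpace ℝ (Fin k))))
    (hSpos : 0 < μH[(l : ℝ)] S)
    (hinf : ∀ b ∈ S,
      hMeasure g (A ∩ ((fun v => v + b) '' (V : Set (EuclideanSpace ℝ (Fin k))))) = ⊤) :
    hMeasure f A = ⊤ := by
  classical
  -- `g` is nonnegative and monotone on `[0, ∞)`
  have hgmono := hg.2.1
  have hgnonneg := hg.2.2.1
  -- dimension of the orthogonal complement
  have hVp : Module.finrank ℝ (Vᗮ) = l := by
    have h := Submodule.finrank_add_finrank_orthogonal (K := V)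
    rw [hV, finrank_euclideanSpace_fin] at h
    omega
  set e0 : (Vᗮ : Submodule ℝ (EuclideanSpace ℝ (Fin k))) ≃ₗᵢ[ℝ] EuclideanSpace ℝ (Fin l) :=
    ((stdOrthonormalBasis ℝ Vᗮ).reindex (finCongr hVp)).repr with he0
  set φ : EuclideanSpace ℝ (Fin k) → (Fin l → ℝ) :=
    fun x => (WithLp.equiv 2 (Fin l → ℝ)) (e0 (Submodule.orthogonalProjectionOnto Vᗮ x)) with hφ
  set ψ : (Fin l → ℝ) → EuclideanSpace ℝ (Fin k) :=
    fun y => ((e0.symm ((WithLp.equiv 2 (Fin l → ℝ)).symm y) : Vᗮ) : EuclideanSpace ℝ (Fin k))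
    with hψ
  -- φ is 1-Lipschitz
  have hproj : LipschitzWith 1 (fun x : EuclideanSpace ℝ (Fin k) =>
      (Submodule.orthogonalProjectionOnto Vᗮ x : Vᗮ)) := by
    refine LipschitzWith.of_dist_le_mul fun x y => ?_
    rw [dist_eq_norm, dist_eq_norm, ← map_sub, NNReal.coe_one, one_mul]
    calc ‖Submodule.orthogonalProjectionOnto Vᗮ (x - y)‖ ≤ ‖Submodule.orthogonalProjectionOnto Vᗮ‖ * ‖x - y‖ :=
          (Submodule.orthogonalProjectionOnto Vᗮ).le_opNorm _
      _ ≤ 1 * ‖x - y‖ := by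
          gcongr
          exact Submodule.orthogonalProjectionOnto_norm_le Vᗮ
      _ = ‖x - y‖ := one_mul _
  have hφlip : LipschitzWith 1 φ := by
    have h2 := (PiLp.lipschitzWith_ofLp 2 (fun _ : Fin l => ℝ)).comp
      (e0.isometry.lipschitz.comp hproj)
    simp only [mul_one] at h2
    exact h2
  -- ψ is Lipschitz
  obtain ⟨K, hψlip⟩ : ∃ K : ℝ≥0, LipschitzWith K ψ := by
    refine ⟨(Fintype.card (Fin l) : ℝ≥0) ^ ((1:ℝ≥0∞) / 2).toReal, ?_⟩
    have h1 : LipschitzWith ((Fintype.card (Fin l) : ℝ≥0) ^ ((1:ℝ≥0∞) / 2).toReal)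
        ((WithLp.equiv 2 (Fin l → ℝ)).symm) :=
      PiLp.lipschitzWith_toLp 2 (fun _ : Fin l => ℝ)
    have h2 := (Submodule.subtypeₗᵢ Vᗮ).isometry.lipschitz.comp
      (e0.symm.isometry.lipschitz.comp h1)
    simp only [one_mul] at h2
    exact h2
  -- ψ ∘ φ = id on Vᗮ
  have hψφ : ∀ b ∈ S, ψ (φ b) = b := by
    intro b hb
    simp only [hψ, hφ, Equiv.symm_apply_apply, LinearIsometryEquiv.symm_apply_apply]
    exact Submodule.starProjection_eq_self_iff.mpr (hS hb)
  -- positivity of the projected set in (Fin l → ℝ)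
  have hκ : 0 < volume (φ '' S) := by
    have hμpi : (μH[(l : ℝ)] : Measure (Fin l → ℝ)) = volume := by
      have := hausdorffMeasure_pi_real (ι := Fin l)
      simpa using this
    by_contra h0
    push_neg at h0
    have h0' : volume (φ '' S) = 0 := le_antisymm h0 zero_le
    have hsub : S ⊆ ψ '' (φ '' S) := fun b hb => ⟨φ b, mem_image_of_mem φ hb, hψφ b hb⟩
    have h1 : μH[(l : ℝ)] S ≤ (K : ℝ≥0∞) ^ (l : ℝ) * μH[(l : ℝ)] (φ '' S) :=
      (measure_mono hsub).trans (hψlip.hausdorffMeasure_image_le (by positivity) _)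
    rw [hμpi, h0', mul_zero] at h1
    exact absurd (le_antisymm h1 zero_le) hSpos.ne'
  -- projection of points in a slice
  have hφslice : ∀ b ∈ S, ∀ v ∈ V, φ (v + b) = φ b := by
    intro b hb v hv
    have hproj0 : Submodule.orthogonalProjectionOnto Vᗮ (v + b) = Submodule.orthogonalProjectionOnto Vᗮ b := by
      rw [map_add,
        Submodule.orthogonalProjectionOnto_apply_of_mem_orthogonal
          (V.le_orthogonal_orthogonal hv), zero_add]
    simp only [hφ, hproj0]
  -- main argument
  by_contra hne
  obtain ⟨N, hN⟩ := ENNReal.exists_nat_gt hne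
  -- constants
  set κ := volume (φ '' S) with hκdef
  set s₁ : ℝ≥0∞ := min κ 1 with hs₁
  have hs₁0 : s₁ ≠ 0 := (lt_min hκ one_pos).ne'
  have hs₁top : s₁ ≠ ⊤ :=
    ne_top_of_le_ne_top ENNReal.one_ne_top (min_le_right _ _)
  have hhalf0 : s₁ / 2 ≠ 0 := by
    simp [ENNReal.div_eq_zero_iff, hs₁0]
  have hhalftop : s₁ / 2 ≠ ⊤ :=
    (ENNReal.div_lt_top hs₁top (by norm_num)).ne
  set M' : ℝ≥0∞ := (N : ℝ≥0∞) / (s₁ / 2) with hM'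
  have hM'top : M' < ⊤ := ENNReal.div_lt_top (by simp) hhalf0
  have hM'mul : M' * (s₁ / 2) = (N : ℝ≥0∞) := ENNReal.div_mul_cancel hhalf0 hhalftop
  -- the scales
  set ε : ℕ → ℝ≥0∞ := fun j => ((j : ℝ≥0∞) + 1)⁻¹ with hε
  have hεpos : ∀ j, 0 < ε j := fun j => ENNReal.inv_pos.mpr (by simp)
  have hεtop : ∀ j, ε j ≠ ⊤ := fun j => ENNReal.inv_ne_top.mpr (by simp)
  have hεanti : ∀ {i j : ℕ}, i ≤ j → ε j ≤ ε i := by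
    intro i j hij
    exact ENNReal.inv_le_inv.mpr (add_le_add_left (by exact_mod_cast hij) 1)
  -- the sets S_j
  set Sj : ℕ → Set (EuclideanSpace ℝ (Fin k)) := fun j =>
    {b ∈ S | M' ≤ IgAux g (A ∩ ((fun v => v + b) '' (V : Set (EuclideanSpace ℝ (Fin k)))))
      (ε j)} with hSj
  have hSjmono : Monotone Sj := by
    intro i j hij b hb
    exact ⟨hb.1, hb.2.trans (IgAux_anti g _ (hεanti hij))⟩
  have hSjunion : S = ⋃ j, Sj j := by
    apply Subset.antisymm
    · intro b hb
      have h1 : M' < ⨆ (r : ℝ≥0∞) (_ : 0 < r),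
          IgAux g (A ∩ ((fun v => v + b) '' (V : Set (EuclideanSpace ℝ (Fin k))))) r := by
        rw [← hMeasure_eq_iSup, hinf b hb]
        exact hM'top
      rw [lt_iSup_iff] at h1
      obtain ⟨r, h2⟩ := h1
      rw [lt_iSup_iff] at h2
      obtain ⟨hr0, h3⟩ := h2
      obtain ⟨n, hn⟩ := ENNReal.exists_inv_nat_lt hr0.ne'
      have hεn : ε n ≤ r := by
        refine le_trans ?_ hn.le
        exact ENNReal.inv_le_inv.mpr (by simp)
      refine mem_iUnion.mpr ⟨n, hb, ?_⟩
      exact h3.le.trans (IgAux_anti g _ hεn)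
    · exact iUnion_subset fun j => fun b hb => hb.1
  -- choose j with large projected measure
  have hsup : (⨆ j, volume (φ '' Sj j)) = κ := by
    rw [hκdef, hSjunion, image_iUnion]
    exact (Monotone.measure_iUnion fun i j hij => image_mono (hSjmono hij)).symm
  have hhalf_lt : s₁ / 2 < ⨆ j, volume (φ '' Sj j) := by
    rw [hsup]
    calc s₁ / 2 < s₁ := ENNReal.half_lt_self hs₁0 hs₁top
      _ ≤ κ := min_le_left _ _
  obtain ⟨j, hj⟩ := lt_iSup_iff.mp hhalf_lt
  -- final contradiction: N ≤ hMeasure f A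
  have hclaim : (N : ℝ≥0∞) ≤ hMeasure f A := by
    rw [hMeasure_eq_iSup]
    refine le_trans ?_ (le_iSup₂ (ε j) (hεpos j))
    refine le_iInf fun t => le_iInf fun hcov => le_iInf fun hdiam => ?_
    -- notation
    set W : ℕ → Set (Fin l → ℝ) := fun n => φ '' (t n) with hW
    set cg : ℕ → ℝ≥0∞ := fun n => ENNReal.ofReal (g (EMetric.diam (t n)).toReal) with hcg
    have hdne : ∀ n, EMetric.diam (t n) ≠ ⊤ := fun n =>
      ((hdiam n).trans_lt (lt_top_iff_ne_top.mpr (hεtop j))).ne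
    -- the pointwise indicator bound on φ '' Sj j
    have h_ind : ∀ y ∈ φ '' Sj j, M' ≤ ∑' n, (W n).indicator (fun _ => cg n) y := by
      rintro y ⟨b, hbSj,er⟩
      subst er
      obtain ⟨hbS, hbI⟩ := hbSj
      set t' : ℕ → Set (EuclideanSpace ℝ (Fin k)) := fun n =>
        t n ∩ (A ∩ ((fun v => v + b) '' (V : Set (EuclideanSpace ℝ (Fin k))))) with ht'
      have hcov' : A ∩ ((fun v => v + b) '' (V : Set (EuclideanSpace ℝ (Fin k)))) ⊆
          ⋃ n, t' n := by
        intro x hx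
        obtain ⟨n, hn⟩ := mem_iUnion.mp (hcov hx.1)
        exact mem_iUnion.mpr ⟨n, hn, hx⟩
      have hdiam' : ∀ n, EMetric.diam (t' n) ≤ ε j := fun n =>
        (EMetric.diam_mono inter_subset_left).trans (hdiam n)
      refine hbI.trans ((IgAux_le g _ (ε j) t' hcov' hdiam').trans ?_)
      refine ENNReal.tsum_le_tsum fun n => ?_
      refine iSup_le fun hne' => ?_
      obtain ⟨x, hx⟩ := hne'
      obtain ⟨hx1, hx2⟩ := hx
      obtain ⟨v, hv, hvx⟩ := hx2.2
      have hφx : φ x = φ b := by rw [← hvx]; exact hφslice b hbS v hv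
      have hmem : φ b ∈ W n := ⟨x, hx1, hφx⟩
      rw [indicator_of_mem hmem]
      refine ENNReal.ofReal_le_ofReal ?_
      refine hgmono (mem_Ici.mpr ENNReal.toReal_nonneg) (mem_Ici.mpr ENNReal.toReal_nonneg) ?_
      exact ENNReal.toReal_mono (hdne n) (EMetric.diam_mono inter_subset_left)
    -- integrate
    have hint := weighted_indicator_le volume cg W (φ '' Sj j) M' h_ind
    -- per-index comparison with the f-sum
    have hper : ∀ n, cg n * volume (W n) ≤
        ⨆ _ : (t n).Nonempty, ENNReal.ofReal (f (EMetric.diam (t n)).toReal) := by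
      intro n
      have hWd : volume (W n) ≤ (EMetric.diam (t n)) ^ l := by
        refine (Real.volume_pi_le_diam_pow (W n)).trans ?_
        rw [Fintype.card_fin]
        gcongr
        have := hφlip.ediam_image_le (t n); rw [ENNReal.coe_one, one_mul] at this; exact this
      by_cases h0 : EMetric.diam (t n) = 0
      · have : volume (W n) = 0 := by
          refine le_antisymm (hWd.trans ?_) zero_le
          rw [h0, zero_pow hl.ne']
        rw [this, mul_zero]
        exact zero_le
      · have hne' : (t n).Nonempty :=
          (EMetric.diam_pos_iff.mp (pos_iff_ne_zero.mpr h0)).nonempty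
        have hdr : 0 < (EMetric.diam (t n)).toReal := ENNReal.toReal_pos h0 (hdne n)
        rw [iSup_pos hne']
        calc cg n * volume (W n)
            ≤ ENNReal.ofReal (g (EMetric.diam (t n)).toReal) *
              (ENNReal.ofReal (EMetric.diam (t n)).toReal) ^ l := by
              rw [hcg]
              gcongr
              rw [ENNReal.ofReal_toReal (hdne n)]
              exact hWd
          _ = ENNReal.ofReal (g (EMetric.diam (t n)).toReal *
                ((EMetric.diam (t n)).toReal) ^ l) := by
              rw [ENNReal.ofReal_mul (hgnonneg _ ENNReal.toReal_nonneg),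
                ENNReal.ofReal_pow ENNReal.toReal_nonneg]
          _ = ENNReal.ofReal (f (EMetric.diam (t n)).toReal) := by
              rw [hgdef _ hdr, div_mul_cancel₀]
              positivity
    calc (N : ℝ≥0∞) = M' * (s₁ / 2) := hM'mul.symm
      _ ≤ M' * volume (φ '' Sj j) := mul_le_mul_right hj.le M'
      _ ≤ ∑' n, cg n * volume (W n) := hint
      _ ≤ ∑' n, ⨆ _ : (t n).Nonempty, ENNReal.ofReal (f (EMetric.diam (t n)).toReal) :=
          ENNReal.tsum_le_tsum hper
  exact absurd hclaim (not_le.mpr hN)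
end

section
/- Fix b ∈ ℝ^m and let Ψ : ℤ^n → ℝ⁺ satisfy Ψ(a) → 0 as |a| → ∞. Let f be a dimension function such that g(r) := r^{-(n-1)m} f(r) is a dimension function. If Σ_{a ∈ ℤ^n \ {0}} g(Ψ(a)/|a|) · |a|^m < ∞, then H^f(W_{n,m}^b(Ψ)) = 0. -/
open MeasureTheory Set Filter
open scoped ENNReal Classical
open Topology

/-- `|a| := max |a_i|` for an integer vector. -/
def anorm {n : ℕ} (a : Fin n → ℤ) : ℕ := Finset.univ.sup fun i => (a i).natAbs

/-- Distance from a real number to the nearest integer. -/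
noncomputable def intDist (x : ℝ) : ℝ := |x - round x|

/-- The set `W_{n,m}^b(Ψ)` of `X ∈ [0,1)^{n×m}` such that
`‖a · x_j - b_j‖ < Ψ(a)` for all `j` for infinitely many `a ∈ ℤ^n`. -/
def W (n m : ℕ) (b : Fin m → ℝ) (Ψ : (Fin n → ℤ) → ℝ) :
    Set (EuclideanSpace ℝ (Fin m × Fin n)) :=
  {X | (∀ ji, X ji ∈ Set.Ico (0:ℝ) 1) ∧
    {a : Fin n → ℤ |
      ∀ j : Fin m, intDist ((∑ i, (a i : ℝ) * X (j, i)) - b j) < Ψ a}.Infinite}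

/-- The unit box `[0,1)^{n×m}`. -/
def box (n m : ℕ) : Set (EuclideanSpace ℝ (Fin m × Fin n)) :=
  {X | ∀ ji, X ji ∈ Set.Ico (0:ℝ) 1}


lemma BA_intDist_nonneg (x : ℝ) : 0 ≤ intDist x := abs_nonneg _

lemma BA_intDist_le (x : ℝ) (q : ℤ) : intDist x ≤ |x - q| := by
  rcases le_or_gt (1/2) |x - q| with h | h
  · exact (abs_sub_round x).trans h
  · have hq : round x = q := by
      rw [round_eq]
      have h1 := (abs_lt.mp h).1
      have h2 := (abs_lt.mp h).2
      have : ⌊x + 1/2⌋ = q := Int.floor_eq_iff.mpr ⟨by push_cast; linarith, by push_cast; linarith⟩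
      exact this
    rw [intDist, hq]

lemma BA_intDist_add (x y : ℝ) : intDist y ≤ intDist x + |y - x| := by
  calc intDist y ≤ |y - round x| := BA_intDist_le y (round x)
    _ ≤ |y - x| + |x - round x| := abs_sub_le y x (round x)
    _ = intDist x + |y - x| := by rw [intDist]; ring

lemma BA_natAbs_le_anorm {n : ℕ} (a : Fin n → ℤ) (i : Fin n) : (a i).natAbs ≤ anorm a := by
  exact Finset.le_sup (f := fun i => (a i).natAbs) (Finset.mem_univ i)

lemma BA_abs_le_anorm {n : ℕ} (a : Fin n → ℤ) (i : Fin n) : |(a i : ℝ)| ≤ (anorm a : ℝ) := by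
  have h := BA_natAbs_le_anorm a i
  calc |(a i : ℝ)| = ((a i).natAbs : ℝ) := by
        rw [Nat.cast_natAbs, Int.cast_abs]
    _ ≤ (anorm a : ℝ) := by exact_mod_cast h

lemma BA_one_le_anorm {n : ℕ} {a : Fin n → ℤ} (ha : a ≠ 0) : 1 ≤ anorm a := by
  obtain ⟨i, hi⟩ := Function.ne_iff.mp ha
  have : 1 ≤ (a i).natAbs := by
    simp only [Pi.zero_apply] at hi; omega
  exact le_trans this (BA_natAbs_le_anorm a i)

lemma BA_exists_anorm {n : ℕ} (hn : 0 < n) (a : Fin n → ℤ) :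
    ∃ i, (a i).natAbs = anorm a := by
  haveI : Nonempty (Fin n) := ⟨⟨0, hn⟩⟩
  obtain ⟨i, _, h⟩ := Finset.exists_mem_eq_sup Finset.univ Finset.univ_nonempty
    (fun i => (a i).natAbs)
  exact ⟨i, h.symm⟩

lemma BA_finite_anorm_lt {n : ℕ} (N : ℕ) : {a : Fin n → ℤ | anorm a < N}.Finite := by
  apply Set.Finite.subset (Set.Finite.pi (fun i : Fin n => Set.finite_Icc (-(N:ℤ)) N))
  intro a ha
  rw [Set.mem_pi]
  intro i _
  have h := BA_natAbs_le_anorm a i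
  have : anorm a < N := ha
  simp only [Set.mem_Icc]
  omega

lemma BA_f_zero {f : ℝ → ℝ} (hc : ContinuousOn f (Set.Ici 0))
    (hl : Filter.Tendsto f (nhdsWithin 0 (Set.Ioi 0)) (nhds 0)) : f 0 = 0 := by
  have h1 : Filter.Tendsto f (nhdsWithin 0 (Set.Ioi 0)) (nhds (f 0)) :=
    (hc 0 Set.self_mem_Ici).mono_left (nhdsWithin_mono _ Set.Ioi_subset_Ici_self)
  exact tendsto_nhds_unique h1 hl

def cube {ι : Type*} [Fintype ι] (s : ℝ) (k : ι → ℤ) : Set (EuclideanSpace ℝ ι) :=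
  {x | ∀ i, x i ∈ Set.Ico ((k i : ℝ) * s) (((k i : ℝ) + 1) * s)}

lemma BA_diam_cube_le {ι : Type*} [Fintype ι] {s : ℝ} (hs : 0 ≤ s) (k : ι → ℤ) :
    EMetric.diam (cube s k) ≤ ENNReal.ofReal ((Fintype.card ι : ℝ) * s) := by
  apply EMetric.diam_le
  intro x hx y hy
  rw [edist_dist]
  apply ENNReal.ofReal_le_ofReal
  rw [EuclideanSpace.dist_eq]
  have h1 : ∑ i, dist (x i) (y i) ^ 2 ≤ ∑ _i : ι, s ^ 2 := by
    apply Finset.sum_le_sum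
    intro i _
    have hxi := hx i; have hyi := hy i
    rw [Real.dist_eq]
    have e1 : ((k i : ℝ) + 1) * s = (k i : ℝ) * s + s := by ring
    have hx1 := hxi.1; have hx2 := hxi.2; have hy1 := hyi.1; have hy2 := hyi.2
    rw [e1] at hx2 hy2
    have habs : |x i - y i| ≤ s := abs_le.mpr ⟨by linarith, by linarith⟩
    nlinarith [abs_nonneg (x i - y i)]
  have h2 : (∑ _i : ι, s ^ 2) = (Fintype.card ι : ℝ) * s ^ 2 := by
    rw [Finset.sum_const, Finset.card_univ, nsmul_eq_mul]
  have hcard : (Fintype.card ι : ℝ) ≤ ((Fintype.card ι : ℝ)) ^ 2 := by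
    have := Nat.le_self_pow (two_ne_zero) (Fintype.card ι)
    exact_mod_cast this
  have key : ∑ i, dist (x i) (y i) ^ 2 ≤ ((Fintype.card ι : ℝ) * s) ^ 2 := by
    nlinarith [sq_nonneg s]
  calc Real.sqrt (∑ i, dist (x i) (y i) ^ 2) ≤ Real.sqrt (((Fintype.card ι : ℝ) * s) ^ 2) :=
        Real.sqrt_le_sqrt key
    _ = (Fintype.card ι : ℝ) * s := Real.sqrt_sq (by positivity)

lemma BA_row_count {n : ℕ} (hn : 0 < n) {K : ℕ} (hKn : n ≤ K) (hK : 1 ≤ K)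
    {a : Fin n → ℤ} (ha : 1 ≤ anorm a) {ψ s : ℝ} (hψ : 0 < ψ) (hψ1 : ψ ≤ 1)
    (hs : s = ψ / ((anorm a : ℝ) * K)) {M : ℕ} (hM : M = ⌈1/s⌉₊) (c : ℝ) :
    ((Fintype.piFinset fun _ : Fin n => Finset.Ico (0:ℤ) (M:ℤ)).filter
      (fun k => ∃ x : Fin n → ℝ,
        (∀ i, x i ∈ Set.Ico ((k i : ℝ) * s) (((k i : ℝ) + 1) * s)) ∧
        intDist ((∑ i, (a i : ℝ) * x i) - c) < ψ)).card
      ≤ M ^ (n - 1) * ((8 * K + 1) * (7 * anorm a)) := by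
  classical
  set R := ((Fintype.piFinset fun _ : Fin n => Finset.Ico (0:ℤ) (M:ℤ)).filter
      (fun k => ∃ x : Fin n → ℝ,
        (∀ i, x i ∈ Set.Ico ((k i : ℝ) * s) (((k i : ℝ) + 1) * s)) ∧
        intDist ((∑ i, (a i : ℝ) * x i) - c) < ψ)) with hR
  set A : ℝ := (anorm a : ℝ) with hA
  have hA1 : (1:ℝ) ≤ A := by rw [hA]; exact_mod_cast ha
  have hA0 : (0:ℝ) < A := by linarith
  have hK0 : (0:ℝ) < (K:ℝ) := by exact_mod_cast hK
  have hKR : (n:ℝ) ≤ (K:ℝ) := by exact_mod_cast hKn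
  have hs0 : 0 < s := by rw [hs]; positivity
  have hK1R : (1:ℝ) ≤ (K:ℝ) := by exact_mod_cast hK
  have hAs : A * s = ψ / K := by rw [hs]; field_simp
  have hbox : ∀ k ∈ R, ∀ i, (0:ℤ) ≤ k i ∧ k i < (M:ℤ) := by
    intro k hk i
    have h1 := (Finset.mem_filter.mp hk).1
    have h2 := Fintype.mem_piFinset.mp h1 i
    exact ⟨(Finset.mem_Ico.mp h2).1, (Finset.mem_Ico.mp h2).2⟩
  obtain ⟨i₀, hi₀⟩ := BA_exists_anorm hn a
  have habs : |(a i₀ : ℝ)| = A := by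
    rw [hA, ← hi₀, Nat.cast_natAbs, Int.cast_abs]
  have habs2 : |(a i₀ : ℝ) * s| = ψ / K := by
    rw [abs_mul, habs, abs_of_pos hs0, hAs]
  -- Step 1 : the grid point almost satisfies the inequality
  have step1 : ∀ k ∈ R, intDist ((∑ i, (a i : ℝ) * (k i : ℝ)) * s - c) < 2 * ψ := by
    intro k hk
    obtain ⟨x, hx, hxd⟩ := (Finset.mem_filter.mp hk).2
    have hdiff : |((∑ i, (a i : ℝ) * (k i : ℝ)) * s - c) - ((∑ i, (a i : ℝ) * x i) - c)| ≤ ψ := by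
      have e2 : ∑ i, (a i : ℝ) * ((k i : ℝ) * s - x i)
          = ∑ i, ((a i : ℝ) * (k i : ℝ) * s) - ∑ i, (a i : ℝ) * x i := by
        rw [← Finset.sum_sub_distrib]
        exact Finset.sum_congr rfl (fun i _ => by ring)
      have e : ((∑ i, (a i : ℝ) * (k i : ℝ)) * s - c) - ((∑ i, (a i : ℝ) * x i) - c)
          = ∑ i, (a i : ℝ) * ((k i : ℝ) * s - x i) := by
        rw [e2, Finset.sum_mul]; ring
      rw [e]
      have hterm : ∀ i ∈ Finset.univ, |(a i : ℝ) * ((k i : ℝ) * s - x i)| ≤ A * s := by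
        intro i _
        rw [abs_mul]
        have h1 : |(k i : ℝ) * s - x i| ≤ s := by
          have hx1 := (hx i).1; have hx2 := (hx i).2
          rw [abs_le]; constructor <;> nlinarith
        exact mul_le_mul (BA_abs_le_anorm a i) h1 (abs_nonneg _) (le_of_lt hA0)
      calc |∑ i, (a i : ℝ) * ((k i : ℝ) * s - x i)|
          ≤ ∑ i, |(a i : ℝ) * ((k i : ℝ) * s - x i)| := Finset.abs_sum_le_sum_abs _ _
        _ ≤ ∑ _i : Fin n, A * s := Finset.sum_le_sum hterm
        _ = n * (A * s) := by
            rw [Finset.sum_const, Finset.card_univ, Fintype.card_fin, nsmul_eq_mul]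
        _ ≤ ψ := by
            rw [hAs]
            have h1 : (n:ℝ) * (ψ / K) ≤ (K:ℝ) * (ψ / K) :=
              mul_le_mul_of_nonneg_right hKR (by positivity)
            have h2 : (K:ℝ) * (ψ / K) = ψ := by field_simp
            linarith
    calc intDist ((∑ i, (a i : ℝ) * (k i : ℝ)) * s - c)
        ≤ intDist ((∑ i, (a i : ℝ) * x i) - c)
          + |((∑ i, (a i : ℝ) * (k i : ℝ)) * s - c) - ((∑ i, (a i : ℝ) * x i) - c)| :=
          BA_intDist_add _ _
      _ < ψ + ψ := by have := hxd; linarith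
      _ = 2 * ψ := by ring
  -- first projection : forget coordinate i₀
  have himage1 : (R.image (fun k => Function.update k i₀ 0)).card ≤ M ^ (n-1) := by
    have hsub : R.image (fun k => Function.update k i₀ 0) ⊆
        Fintype.piFinset (fun i => if i = i₀ then ({0} : Finset ℤ) else Finset.Ico (0:ℤ) (M:ℤ)) := by
      intro k' hk'
      rw [Finset.mem_image] at hk'
      obtain ⟨k, hk, rfl⟩ := hk'
      rw [Fintype.mem_piFinset]
      intro i
      by_cases h : i = i₀
      · subst h; simp
      · rw [Function.update_of_ne h]
        simp only [if_neg h]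
        rw [Finset.mem_Ico]
        exact ⟨(hbox k hk i).1, (hbox k hk i).2⟩
    have hcardif : ∀ i : Fin n,
        (if i = i₀ then ({0} : Finset ℤ) else Finset.Ico (0:ℤ) (M:ℤ)).card
          = if i = i₀ then 1 else M := by
      intro i
      by_cases h : i = i₀ <;> simp [h, Int.card_Ico]
    calc (R.image (fun k => Function.update k i₀ 0)).card
        ≤ (Fintype.piFinset (fun i => if i = i₀ then ({0} : Finset ℤ) else Finset.Ico (0:ℤ) (M:ℤ))).card :=
          Finset.card_le_card hsub
      _ = ∏ i : Fin n, (if i = i₀ then ({0} : Finset ℤ) else Finset.Ico (0:ℤ) (M:ℤ)).card :=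
          Fintype.card_piFinset _
      _ = ∏ i : Fin n, (if i = i₀ then 1 else M) := Finset.prod_congr rfl (fun i _ => hcardif i)
      _ = M ^ (n-1) := by
          rw [← Finset.mul_prod_erase Finset.univ _ (Finset.mem_univ i₀)]
          rw [if_pos rfl, one_mul]
          rw [Finset.prod_congr rfl (fun i hi => if_neg (Finset.ne_of_mem_erase hi))]
          rw [Finset.prod_const, Finset.card_erase_of_mem (Finset.mem_univ i₀),
            Finset.card_univ, Fintype.card_fin]
  -- fibers of the first projection
  have hfib1 : ∀ k' ∈ R.image (fun k => Function.update k i₀ 0),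
      (R.filter fun k => Function.update k i₀ 0 = k').card ≤ (8*K+1) * (7 * anorm a) := by
    intro k' _
    set S := R.filter (fun k => Function.update k i₀ 0 = k') with hSdef
    show S.card ≤ (8*K+1) * (7 * anorm a)
    have hcoord : ∀ k ∈ S, ∀ i, i ≠ i₀ → k i = k' i := by
      intro k hk i hi
      have h2 := (Finset.mem_filter.mp hk).2
      rw [← h2, Function.update_of_ne hi]
    set c₂ : ℝ := ∑ i ∈ Finset.univ.erase i₀, (a i : ℝ) * (k' i : ℝ) with hc₂
    have hsplit : ∀ k ∈ S, (∑ i, (a i : ℝ) * (k i : ℝ)) = (a i₀ : ℝ) * (k i₀ : ℝ) + c₂ := by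
      intro k hk
      rw [← Finset.add_sum_erase Finset.univ _ (Finset.mem_univ i₀)]
      congr 1
      apply Finset.sum_congr rfl
      intro i hi
      rw [hcoord k hk i (Finset.ne_of_mem_erase hi)]
    have hS2 : ∀ k ∈ S, intDist (((a i₀ : ℝ) * (k i₀ : ℝ) + c₂) * s - c) < 2*ψ := by
      intro k hk
      have h1 := step1 k (Finset.mem_filter.mp hk).1
      rw [hsplit k hk] at h1
      exact h1
    have hfib2 : ∀ p ∈ S.image (fun k => round (((a i₀ : ℝ) * (k i₀ : ℝ) + c₂) * s - c)),
        (S.filter fun k => round (((a i₀ : ℝ) * (k i₀ : ℝ) + c₂) * s - c) = p).card ≤ 8*K+1 := by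
      intro p _
      set T2 := S.filter (fun k => round (((a i₀ : ℝ) * (k i₀ : ℝ) + c₂) * s - c) = p) with hT2
      rcases Finset.eq_empty_or_nonempty T2 with h | ⟨u, hu⟩
      · simp [h]
      have hclose : ∀ k ∈ T2, |(((a i₀ : ℝ) * (k i₀ : ℝ) + c₂) * s - c) - p| < 2*ψ := by
        intro k hk
        have hk2 := Finset.mem_filter.mp hk
        have h1 := hS2 k hk2.1
        rw [intDist, hk2.2] at h1
        exact h1
      have hbound : ∀ k ∈ T2, k i₀ ∈ Finset.Icc (u i₀ - 4*(K:ℤ)) (u i₀ + 4*(K:ℤ)) := by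
        intro k hk
        have h1 := hclose k hk
        have h2 := hclose u hu
        have h3 : |(((a i₀ : ℝ) * (k i₀ : ℝ) + c₂) * s - c) - (((a i₀ : ℝ) * (u i₀ : ℝ) + c₂) * s - c)| < 4*ψ := by
          calc |(((a i₀ : ℝ) * (k i₀ : ℝ) + c₂) * s - c) - (((a i₀ : ℝ) * (u i₀ : ℝ) + c₂) * s - c)|
              ≤ |(((a i₀ : ℝ) * (k i₀ : ℝ) + c₂) * s - c) - p|
                + |p - (((a i₀ : ℝ) * (u i₀ : ℝ) + c₂) * s - c)| := abs_sub_le _ _ _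
            _ = |(((a i₀ : ℝ) * (k i₀ : ℝ) + c₂) * s - c) - p|
                + |(((a i₀ : ℝ) * (u i₀ : ℝ) + c₂) * s - c) - p| := by rw [abs_sub_comm (p:ℝ)]
            _ < 2*ψ + 2*ψ := by linarith
            _ = 4*ψ := by ring
        have h4 : (((a i₀ : ℝ) * (k i₀ : ℝ) + c₂) * s - c) - (((a i₀ : ℝ) * (u i₀ : ℝ) + c₂) * s - c)
            = ((a i₀ : ℝ) * s) * ((k i₀ : ℝ) - (u i₀ : ℝ)) := by ring
        rw [h4, abs_mul, habs2] at h3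
        have hpos : 0 < ψ / (K:ℝ) := by positivity
        have e44 : (ψ/(K:ℝ)) * (4*(K:ℝ)) = 4*ψ := by field_simp
        have h5 : |(k i₀ : ℝ) - (u i₀ : ℝ)| < 4*(K:ℝ) := by
          apply lt_of_mul_lt_mul_left _ hpos.le
          rw [e44]; exact h3
        rw [abs_lt] at h5
        have h61 : -(4*(K:ℤ)) < k i₀ - u i₀ := by exact_mod_cast (by push_cast; linarith [h5.1] : -(4*((K:ℤ):ℝ)) < ((k i₀ - u i₀ : ℤ) : ℝ))
        have h62 : k i₀ - u i₀ < 4*(K:ℤ) := by exact_mod_cast (by push_cast; linarith [h5.2] : ((k i₀ - u i₀ : ℤ) : ℝ) < 4*((K:ℤ):ℝ))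
        rw [Finset.mem_Icc]
        omega
      have hinj : Set.InjOn (fun k => k i₀) (T2 : Set (Fin n → ℤ)) := by
        intro k1 h1 k2 h2 heq
        have m1 := Finset.mem_filter.mp h1
        have m2 := Finset.mem_filter.mp h2
        funext i
        by_cases h : i = i₀
        · subst h; exact heq
        · rw [hcoord k1 m1.1 i h, hcoord k2 m2.1 i h]
      calc T2.card ≤ (Finset.Icc (u i₀ - 4*(K:ℤ)) (u i₀ + 4*(K:ℤ))).card :=
            Finset.card_le_card_of_injOn _ hbound hinj
        _ = 8*K+1 := by rw [Int.card_Icc]; omega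
    have himage2 : (S.image fun k => round (((a i₀ : ℝ) * (k i₀ : ℝ) + c₂) * s - c)).card
        ≤ 7 * anorm a := by
      set c₀ : ℝ := c₂ * s - c with hc₀
      have hsub : (S.image fun k => round (((a i₀ : ℝ) * (k i₀ : ℝ) + c₂) * s - c)) ⊆
          Finset.Icc ⌈c₀ - 2*A - 1⌉ ⌊c₀ + 2*A + 1⌋ := by
        intro p hp
        rw [Finset.mem_image] at hp
        obtain ⟨k, hk, rfl⟩ := hp
        have hki := hbox k (Finset.mem_filter.mp hk).1 i₀
        have hk0 : (0:ℝ) ≤ (k i₀ : ℝ) := by exact_mod_cast hki.1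
        have hkM : (k i₀ : ℝ) ≤ (M:ℝ) := by exact_mod_cast le_of_lt hki.2
        have hekc : |(((a i₀ : ℝ) * (k i₀ : ℝ) + c₂) * s - c) - c₀| ≤ 2*A := by
          have he : (((a i₀ : ℝ) * (k i₀ : ℝ) + c₂) * s - c) - c₀ = ((a i₀ : ℝ) * s) * (k i₀ : ℝ) := by
            rw [hc₀]; ring
          rw [he, abs_mul, habs2, abs_of_nonneg hk0]
          have hMb : (M:ℝ) < 1/s + 1 := by
            rw [hM]; exact Nat.ceil_lt_add_one (by positivity)
          have h1s : 1/s = A * (K:ℝ) / ψ := by rw [hs]; field_simp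
          have hψK : ψ / (K:ℝ) ≤ 1 := by
            rw [div_le_one hK0]; linarith
          have hKψpos : 0 < ψ / (K:ℝ) := by positivity
          have e1 : (ψ / (K:ℝ)) * (1/s + 1) = A + ψ / K := by
            rw [h1s]; field_simp
          have t1 : (ψ/(K:ℝ)) * (M:ℝ) ≤ (ψ/(K:ℝ)) * (1/s + 1) :=
            mul_le_mul_of_nonneg_left hMb.le hKψpos.le
          rw [e1] at t1
          have key : (ψ / (K:ℝ)) * (M:ℝ) ≤ 2*A := by linarith
          have t2 : (ψ/(K:ℝ)) * (k i₀ : ℝ) ≤ (ψ/(K:ℝ)) * (M:ℝ) :=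
            mul_le_mul_of_nonneg_left hkM hKψpos.le
          linarith
        have hr1 := abs_sub_round (((a i₀ : ℝ) * (k i₀ : ℝ) + c₂) * s - c)
        have ha1 := abs_le.mp hekc
        have ha2 := abs_le.mp hr1
        have hup : ((round (((a i₀ : ℝ) * (k i₀ : ℝ) + c₂) * s - c) : ℤ) : ℝ) ≤ c₀ + 2*A + 1 := by
          linarith [ha1.2, ha2.1]
        have hlo : c₀ - 2*A - 1 ≤ ((round (((a i₀ : ℝ) * (k i₀ : ℝ) + c₂) * s - c) : ℤ) : ℝ) := by
          linarith [ha1.1, ha2.2]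
        rw [Finset.mem_Icc]
        exact ⟨Int.ceil_le.mpr hlo, Int.le_floor.mpr hup⟩
      calc (S.image fun k => round (((a i₀ : ℝ) * (k i₀ : ℝ) + c₂) * s - c)).card
          ≤ (Finset.Icc ⌈c₀ - 2*A - 1⌉ ⌊c₀ + 2*A + 1⌋).card := Finset.card_le_card hsub
        _ ≤ 7 * anorm a := by
            rw [Int.card_Icc, Int.toNat_le]
            have h1 : ((⌊c₀ + 2*A + 1⌋ : ℤ) : ℝ) ≤ c₀ + 2*A + 1 := Int.floor_le _
            have h2 : c₀ - 2*A - 1 ≤ ((⌈c₀ - 2*A - 1⌉ : ℤ) : ℝ) := Int.le_ceil _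
            have h3 : ((⌊c₀ + 2*A + 1⌋ + 1 - ⌈c₀ - 2*A - 1⌉ : ℤ) : ℝ) ≤ ((7 * anorm a : ℕ) : ℝ) := by
              push_cast
              rw [← hA]
              linarith
            exact_mod_cast h3
    calc S.card ≤ (8*K+1) * (S.image fun k => round (((a i₀ : ℝ) * (k i₀ : ℝ) + c₂) * s - c)).card :=
          Finset.card_le_mul_card_image S (8*K+1) hfib2
      _ ≤ (8*K+1) * (7 * anorm a) := Nat.mul_le_mul_left _ himage2
  calc R.card ≤ ((8*K+1) * (7*anorm a)) * (R.image (fun k => Function.update k i₀ 0)).card :=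
        Finset.card_le_mul_card_image R _ hfib1
    _ ≤ ((8*K+1) * (7*anorm a)) * M^(n-1) := Nat.mul_le_mul_left _ himage1
    _ = M^(n-1) * ((8*K+1) * (7*anorm a)) := Nat.mul_comm _ _

lemma BA_matrix_count {n m : ℕ} (hn : 0 < n) {K : ℕ} (hKn : n ≤ K) (hK : 1 ≤ K)
    {a : Fin n → ℤ} (ha : 1 ≤ anorm a) {ψ s : ℝ} (hψ : 0 < ψ) (hψ1 : ψ ≤ 1)
    (hs : s = ψ / ((anorm a : ℝ) * K)) {M : ℕ} (hM : M = ⌈1/s⌉₊) (b : Fin m → ℝ) :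
    ((Fintype.piFinset fun _ : Fin m × Fin n => Finset.Ico (0:ℤ) (M:ℤ)).filter
      (fun k => ∃ X : Fin m × Fin n → ℝ,
        (∀ ji, X ji ∈ Set.Ico ((k ji : ℝ) * s) (((k ji : ℝ) + 1) * s)) ∧
        ∀ j, intDist ((∑ i, (a i : ℝ) * X (j, i)) - b j) < ψ)).card
      ≤ (M ^ (n - 1) * ((8 * K + 1) * (7 * anorm a))) ^ m := by
  classical
  set Row : Fin m → Finset (Fin n → ℤ) := fun j =>
    (Fintype.piFinset fun _ : Fin n => Finset.Ico (0:ℤ) (M:ℤ)).filter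
      (fun k => ∃ x : Fin n → ℝ,
        (∀ i, x i ∈ Set.Ico ((k i : ℝ) * s) (((k i : ℝ) + 1) * s)) ∧
        intDist ((∑ i, (a i : ℝ) * x i) - b j) < ψ) with hRow
  set T := ((Fintype.piFinset fun _ : Fin m × Fin n => Finset.Ico (0:ℤ) (M:ℤ)).filter
      (fun k => ∃ X : Fin m × Fin n → ℝ,
        (∀ ji, X ji ∈ Set.Ico ((k ji : ℝ) * s) (((k ji : ℝ) + 1) * s)) ∧
        ∀ j, intDist ((∑ i, (a i : ℝ) * X (j, i)) - b j) < ψ)) with hT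
  have hmap : ∀ k ∈ T, (fun j i => k (j, i)) ∈ Fintype.piFinset Row := by
    intro k hk
    have hk1 := (Finset.mem_filter.mp hk).1
    obtain ⟨X, hX, hXd⟩ := (Finset.mem_filter.mp hk).2
    rw [Fintype.mem_piFinset]
    intro j
    rw [hRow, Finset.mem_filter]
    constructor
    · rw [Fintype.mem_piFinset]
      intro i
      exact Fintype.mem_piFinset.mp hk1 (j, i)
    · exact ⟨fun i => X (j, i), fun i => hX (j, i), hXd j⟩
  have hinj : Set.InjOn (fun k (j : Fin m) (i : Fin n) => k (j, i)) (T : Set (Fin m × Fin n → ℤ)) := by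
    intro k1 _ k2 _ heq
    funext ji
    obtain ⟨j, i⟩ := ji
    exact congrFun (congrFun heq j) i
  calc T.card ≤ (Fintype.piFinset Row).card := Finset.card_le_card_of_injOn _ hmap hinj
    _ = ∏ j, (Row j).card := Fintype.card_piFinset _
    _ ≤ ∏ _j : Fin m, (M ^ (n - 1) * ((8 * K + 1) * (7 * anorm a))) := by
        apply Finset.prod_le_prod'
        intro j _
        rw [hRow]
        exact BA_row_count hn hKn hK ha hψ hψ1 hs hM (b j)
    _ = (M ^ (n - 1) * ((8 * K + 1) * (7 * anorm a))) ^ m := by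
        rw [Finset.prod_const, Finset.card_univ, Fintype.card_fin]

lemma BA_alg {A ψ : ℝ} (hA : 1 ≤ A) (hψ : 0 < ψ) {n m : ℕ} (hn : 0 < n) :
    (A^n / ψ^(n-1))^m * (ψ/A)^((n-1)*m) = A^m := by
  have hA0 : (0:ℝ) < A := by linarith
  have hnm : n*m = m + (n-1)*m := by
    rcases n with _ | n'
    · omega
    · simp [Nat.succ_sub_one]; ring
  have h1 : ψ^((n-1)*m) ≠ 0 := pow_ne_zero _ hψ.ne'
  have h2 : A^((n-1)*m) ≠ 0 := pow_ne_zero _ hA0.ne'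
  rw [div_pow, div_pow, ← pow_mul, ← pow_mul, hnm, pow_add]
  field_simp

lemma BA_numeric {n m K AN M : ℕ} (hn : 0 < n) (hKn : n ≤ K) (hK : 1 ≤ K)
    (hAN : 1 ≤ AN) {ψ : ℝ} (hψ : 0 < ψ) (hψ1 : ψ ≤ 1)
    (hM : M = ⌈1/(ψ / ((AN:ℝ) * K))⌉₊)
    {fv gv : ℝ} (hfg : fv = gv * (ψ/(AN:ℝ))^((n-1)*m)) (hgv : 0 ≤ gv) :
    (((M ^ (n - 1) * ((8 * K + 1) * (7 * AN))) ^ m : ℕ) : ℝ) * fv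
      ≤ ((2*(K:ℝ))^(n-1) * ((8*(K:ℝ)+1)*7))^m * (gv * (AN:ℝ)^m) := by
  set A : ℝ := (AN:ℝ) with hA
  have hA1 : (1:ℝ) ≤ A := by rw [hA]; exact_mod_cast hAN
  have hA0 : (0:ℝ) < A := by linarith
  have hK1 : (1:ℝ) ≤ (K:ℝ) := by exact_mod_cast hK
  have hK0 : (0:ℝ) < (K:ℝ) := by linarith
  have hs0 : 0 < ψ / (A * K) := by positivity
  have step1 : (M:ℝ) ≤ 2*A*(K:ℝ)/ψ := by
    have h1 : (M:ℝ) < 1/(ψ / (A * K)) + 1 := by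
      rw [hM]; exact Nat.ceil_lt_add_one (by positivity)
    have h2 : 1/(ψ / (A * K)) = A*(K:ℝ)/ψ := by field_simp
    rw [h2] at h1
    have h3 : (1:ℝ) ≤ A*(K:ℝ)/ψ := by
      rw [le_div_iff₀ hψ]; nlinarith
    have h4 : A*(K:ℝ)/ψ + 1 ≤ 2*A*(K:ℝ)/ψ := by
      have : 2*A*(K:ℝ)/ψ = A*(K:ℝ)/ψ + A*(K:ℝ)/ψ := by ring
      rw [this]; linarith
    linarith
  have step2 : (M:ℝ)^(n-1) ≤ (2*A*(K:ℝ)/ψ)^(n-1) :=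
    pow_le_pow_left₀ (Nat.cast_nonneg M) step1 _
  have step3 : (2*A*(K:ℝ)/ψ)^(n-1) = (2*(K:ℝ))^(n-1) * A^(n-1) / ψ^(n-1) := by
    rw [div_pow, mul_pow, mul_pow, mul_pow]; ring
  have hpa : A^(n-1)*A = A^n := by
    rw [← pow_succ]; congr 1; omega
  have step4 : ((2*(K:ℝ))^(n-1) * A^(n-1) / ψ^(n-1)) * ((8*(K:ℝ)+1)*(7*A))
      = ((2*(K:ℝ))^(n-1) * ((8*(K:ℝ)+1)*7)) * (A^n / ψ^(n-1)) := by
    rw [← hpa]; ring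
  have step5 : (M:ℝ)^(n-1) * ((8*(K:ℝ)+1)*(7*A))
      ≤ ((2*(K:ℝ))^(n-1) * ((8*(K:ℝ)+1)*7)) * (A^n / ψ^(n-1)) := by
    calc (M:ℝ)^(n-1) * ((8*(K:ℝ)+1)*(7*A))
        ≤ (2*A*(K:ℝ)/ψ)^(n-1) * ((8*(K:ℝ)+1)*(7*A)) :=
          mul_le_mul_of_nonneg_right step2 (by positivity)
      _ = _ := by rw [step3, step4]
  have step6 : ((M:ℝ)^(n-1) * ((8*(K:ℝ)+1)*(7*A)))^m
      ≤ (((2*(K:ℝ))^(n-1) * ((8*(K:ℝ)+1)*7)) * (A^n / ψ^(n-1)))^m :=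
    pow_le_pow_left₀ (by positivity) step5 m
  have hcast : (((M ^ (n - 1) * ((8 * K + 1) * (7 * AN))) ^ m : ℕ) : ℝ)
      = ((M:ℝ)^(n-1) * ((8*(K:ℝ)+1)*(7*A)))^m := by
    push_cast; ring
  have hfv0 : 0 ≤ fv := by
    rw [hfg]; positivity
  have halg := BA_alg hA1 hψ (n := n) (m := m) hn
  calc (((M ^ (n - 1) * ((8 * K + 1) * (7 * AN))) ^ m : ℕ) : ℝ) * fv
      = ((M:ℝ)^(n-1) * ((8*(K:ℝ)+1)*(7*A)))^m * fv := by rw [hcast]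
    _ ≤ (((2*(K:ℝ))^(n-1) * ((8*(K:ℝ)+1)*7)) * (A^n / ψ^(n-1)))^m * fv :=
        mul_le_mul_of_nonneg_right step6 hfv0
    _ = ((2*(K:ℝ))^(n-1) * ((8*(K:ℝ)+1)*7))^m
        * ((A^n / ψ^(n-1))^m * (ψ/A)^((n-1)*m)) * gv := by
        rw [mul_pow, hfg]; ring
    _ = ((2*(K:ℝ))^(n-1) * ((8*(K:ℝ)+1)*7))^m * (gv * A^m) := by
        rw [halg]; ring

theorem stmt6 {n m : ℕ} (hn : 0 < n) (hm : 0 < m) (b : Fin m → ℝ)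
    (Ψ : (Fin n → ℤ) → ℝ) (hΨ0 : ∀ a, 0 ≤ Ψ a)
    (hΨlim : ∀ ε > (0:ℝ), ∃ N : ℕ, ∀ a : Fin n → ℤ, N ≤ anorm a → Ψ a < ε)
    (f g : ℝ → ℝ) (hf : IsDimFun f) (hg : IsDimFun g)
    (hgdef : ∀ r > (0:ℝ), g r = f r / r ^ ((n - 1) * m))
    (hconv : ∑' a : {a : Fin n → ℤ // a ≠ 0},
        ENNReal.ofReal (g (Ψ a.1 / (anorm a.1 : ℝ)) * (anorm a.1 : ℝ) ^ m) ≠ ⊤) :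
    hMeasure f (W n m b Ψ) = 0 := by
  classical
  set K : ℕ := m * n with hKdef
  have hKn : n ≤ K := Nat.le_mul_of_pos_left n hm
  have hK1 : 1 ≤ K := Nat.one_le_iff_ne_zero.mpr (Nat.mul_ne_zero hm.ne' hn.ne')
  have hK0R : (0:ℝ) < (K:ℝ) := by exact_mod_cast hK1
  have hf0 : f 0 = 0 := BA_f_zero hf.1 hf.2.2.2
  set mfun : ℝ≥0∞ → ℝ≥0∞ := fun d => ENNReal.ofReal (f d.toReal) with hmfun
  set sa : (Fin n → ℤ) → ℝ := fun a => Ψ a / ((anorm a : ℝ) * K) with hsa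
  set Ma : (Fin n → ℤ) → ℕ := fun a => ⌈1/(sa a)⌉₊ with hMa
  set T : (Fin n → ℤ) → Finset (Fin m × Fin n → ℤ) := fun a =>
    (Fintype.piFinset fun _ : Fin m × Fin n => Finset.Ico (0:ℤ) ((Ma a : ℕ):ℤ)).filter
      (fun k => ∃ X : Fin m × Fin n → ℝ,
        (∀ ji, X ji ∈ Set.Ico ((k ji : ℝ) * sa a) (((k ji : ℝ) + 1) * sa a)) ∧
        ∀ j, intDist ((∑ i, (a i : ℝ) * X (j, i)) - b j) < Ψ a) with hT
  have hthr : ∀ N : ℕ, ∃ P : ℕ, ∀ a : Fin n → ℤ, P ≤ anorm a → Ψ a < 1/((N:ℝ)+1) :=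
    fun N => hΨlim _ (by positivity)
  choose Φ0 hΦ0 using hthr
  set Φ : ℕ → ℕ := fun N => max (Φ0 N) (max N 1) with hΦ
  have hΦ1 : ∀ N, 1 ≤ Φ N := fun N => le_max_of_le_right (le_max_right _ _)
  have hΦN : ∀ N, N ≤ Φ N := fun N => le_max_of_le_right (le_max_left _ _)
  have hΦΨ : ∀ N a, Φ N ≤ anorm a → Ψ a < 1/((N:ℝ)+1) :=
    fun N a h => hΦ0 N a (le_trans (le_max_left _ _) h)
  set t : ℕ → (Fin n → ℤ) × (Fin m × Fin n → ℤ) → Set (EuclideanSpace ℝ (Fin m × Fin n)) :=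
    fun N p => if Φ N ≤ anorm p.1 ∧ p.2 ∈ T p.1 then cube (sa p.1) p.2 else ∅ with ht
  have hN1le : ∀ N : ℕ, (1:ℝ)/((N:ℝ)+1) ≤ 1 := by
    intro N
    rw [div_le_one (by positivity)]
    have : (0:ℝ) ≤ (N:ℝ) := Nat.cast_nonneg N
    linarith
  -- covering
  have hcov : ∀ N, W n m b Ψ ⊆ ⋃ p, t N p := by
    intro N X hX
    obtain ⟨hXbox, hXinf⟩ := hX
    obtain ⟨a, haS, haN⟩ : ∃ a : Fin n → ℤ,
        (∀ j, intDist ((∑ i, (a i : ℝ) * X (j, i)) - b j) < Ψ a) ∧ Φ N ≤ anorm a := by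
      obtain ⟨a, ha⟩ := (hXinf.diff (BA_finite_anorm_lt (n := n) (Φ N))).nonempty
      exact ⟨a, ha.1, not_lt.mp ha.2⟩
    have ha1 : 1 ≤ anorm a := le_trans (hΦ1 N) haN
    have hA0 : (0:ℝ) < (anorm a : ℝ) := by exact_mod_cast ha1
    have hψ : 0 < Ψ a := lt_of_le_of_lt (BA_intDist_nonneg _) (haS ⟨0, hm⟩)
    have hs0 : 0 < sa a := by rw [hsa]; positivity
    set k : Fin m × Fin n → ℤ := fun ji => ⌊X ji / sa a⌋ with hk
    have hcube : X ∈ cube (sa a) k := by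
      intro ji
      constructor
      · calc (⌊X ji / sa a⌋ : ℝ) * sa a ≤ (X ji / sa a) * sa a :=
            mul_le_mul_of_nonneg_right (Int.floor_le _) hs0.le
          _ = X ji := div_mul_cancel₀ _ hs0.ne'
      · calc X ji = (X ji / sa a) * sa a := (div_mul_cancel₀ _ hs0.ne').symm
          _ < ((⌊X ji / sa a⌋ : ℝ) + 1) * sa a :=
            mul_lt_mul_of_pos_right (Int.lt_floor_add_one _) hs0
    have hkT : k ∈ T a := by
      rw [hT, Finset.mem_filter]
      constructor
      · rw [Fintype.mem_piFinset]
        intro ji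
        rw [Finset.mem_Ico]
        refine ⟨Int.floor_nonneg.mpr (div_nonneg (hXbox ji).1 hs0.le), ?_⟩
        rw [Int.floor_lt]
        push_cast
        calc X ji / sa a < 1 / sa a := div_lt_div_of_pos_right (hXbox ji).2 hs0
          _ ≤ (Ma a : ℝ) := by rw [hMa]; exact Nat.le_ceil _
      · exact ⟨X, hcube, haS⟩
    exact Set.mem_iUnion.mpr ⟨(a, k), by simp only [ht]; rw [if_pos ⟨haN, hkT⟩]; exact hcube⟩
  -- basic facts about sa
  have hcard : (Fintype.card (Fin m × Fin n) : ℝ) = (K:ℝ) := by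
    rw [Fintype.card_prod, Fintype.card_fin, Fintype.card_fin, hKdef]
  have hKsa : ∀ a : Fin n → ℤ, 1 ≤ anorm a → (K:ℝ) * sa a = Ψ a / (anorm a : ℝ) := by
    intro a ha1
    have hA0 : (0:ℝ) < (anorm a : ℝ) := by exact_mod_cast ha1
    rw [hsa]
    field_simp
  -- diameters
  have hdiam : ∀ N p, EMetric.diam (t N p) ≤ ENNReal.ofReal (1/((N:ℝ)+1)) := by
    intro N p
    simp only [ht]
    split_ifs with h
    · obtain ⟨hN, hkT⟩ := h
      have ha1 : 1 ≤ anorm p.1 := le_trans (hΦ1 N) hN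
      have hA1 : (1:ℝ) ≤ (anorm p.1 : ℝ) := by exact_mod_cast ha1
      have hψlt := hΦΨ N p.1 hN
      have hs0 : 0 ≤ sa p.1 := by
        rw [hsa]
        have := hΨ0 p.1
        positivity
      calc EMetric.diam (cube (sa p.1) p.2)
          ≤ ENNReal.ofReal ((Fintype.card (Fin m × Fin n) : ℝ) * sa p.1) :=
            BA_diam_cube_le hs0 _
        _ ≤ ENNReal.ofReal (1/((N:ℝ)+1)) := by
            apply ENNReal.ofReal_le_ofReal
            rw [hcard, hKsa p.1 ha1]
            calc Ψ p.1 / (anorm p.1 : ℝ) ≤ Ψ p.1 := div_le_self (hΨ0 p.1) hA1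
              _ ≤ 1/((N:ℝ)+1) := hψlt.le
    · simp [EMetric.diam]
  -- the tendsto of radii
  have hr0 : Tendsto (fun N : ℕ => ENNReal.ofReal (1/((N:ℝ)+1))) atTop (𝓝 0) := by
    rw [← ENNReal.ofReal_zero]
    exact ENNReal.tendsto_ofReal tendsto_one_div_add_atTop_nhds_zero_nat
  have hmk := Measure.mkMetric_le_liminf_tsum (W n m b Ψ)
    (fun N : ℕ => ENNReal.ofReal (1/((N:ℝ)+1))) hr0 t
    (Filter.Eventually.of_forall fun N => hdiam N)
    (Filter.Eventually.of_forall hcov) mfun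
  -- summability data
  set F : (Fin n → ℤ) → ℝ≥0∞ := fun a =>
    if a = 0 then 0 else ENNReal.ofReal (g (Ψ a / (anorm a : ℝ)) * (anorm a : ℝ) ^ m) with hF
  have hFsum : ∑' a, F a ≠ ⊤ := by
    have he : ∀ a : Fin n → ℤ, F a = Set.indicator {a : Fin n → ℤ | a ≠ 0}
        (fun a => ENNReal.ofReal (g (Ψ a / (anorm a : ℝ)) * (anorm a : ℝ) ^ m)) a := by
      intro a
      by_cases h : a = 0 <;> simp [hF, Set.indicator, h]
    rw [tsum_congr he, ← tsum_subtype]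
    exact hconv
  set C : ℝ≥0∞ := ENNReal.ofReal (((2*(K:ℝ))^(n-1) * ((8*(K:ℝ)+1)*7))^m) with hC
  -- the key estimate
  have hsum : ∀ N, (∑' p : (Fin n → ℤ) × (Fin m × Fin n → ℤ), mfun (EMetric.diam (t N p)))
      ≤ C * ∑' a1, Set.indicator {a1 : Fin n → ℤ | Φ N ≤ anorm a1} F a1 := by
    intro N
    have hprod : (∑' p : (Fin n → ℤ) × (Fin m × Fin n → ℤ), mfun (EMetric.diam (t N p)))
        = ∑' a, ∑' k, mfun (EMetric.diam (t N (a, k))) := by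
      rw [← ENNReal.tsum_prod]
    rw [hprod, ← ENNReal.tsum_mul_left]
    apply ENNReal.tsum_le_tsum
    intro a
    by_cases hN : Φ N ≤ anorm a
    · have ha1 : 1 ≤ anorm a := le_trans (hΦ1 N) hN
      have ha0 : a ≠ 0 := by
        intro h
        have h0 : anorm a = 0 := by
          rw [h]
          refine le_antisymm (Finset.sup_le fun i _ => ?_) (Nat.zero_le _)
          simp
        have := hΦ1 N
        omega
      have hA1 : (1:ℝ) ≤ (anorm a : ℝ) := by exact_mod_cast ha1
      have hA0 : (0:ℝ) < (anorm a : ℝ) := by linarith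
      have hind : Set.indicator {a1 : Fin n → ℤ | Φ N ≤ anorm a1} F a =
          ENNReal.ofReal (g (Ψ a / (anorm a : ℝ)) * (anorm a : ℝ) ^ m) := by
        have hmem : a ∈ {a1 : Fin n → ℤ | Φ N ≤ anorm a1} := hN
        rw [Set.indicator_of_mem hmem, hF]
        simp only [if_neg ha0]
      rw [hind]
      by_cases hψ : 0 < Ψ a
      · have hψ1 : Ψ a ≤ 1 := le_trans (hΦΨ N a hN).le (hN1le N)
        have hzero : ∀ k ∉ T a, mfun (EMetric.diam (t N (a, k))) = 0 := by
          intro k hk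
          simp only [ht]
          rw [if_neg (fun hcon => hk hcon.2), EMetric.diam, Metric.ediam_empty, hmfun]
          simp [hf0]
        have hsum1 : (∑' k, mfun (EMetric.diam (t N (a, k))))
            = ∑ k ∈ T a, mfun (EMetric.diam (cube (sa a) k)) := by
          rw [tsum_eq_sum hzero]
          refine Finset.sum_congr rfl fun k hk => ?_
          simp only [ht]
          rw [if_pos ⟨hN, hk⟩]
        have hs0 : 0 < sa a := by rw [hsa]; positivity
        have hdiamle : ∀ k ∈ T a, mfun (EMetric.diam (cube (sa a) k))
            ≤ ENNReal.ofReal (f (Ψ a / (anorm a : ℝ))) := by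
          intro k _
          have h1 : EMetric.diam (cube (sa a) k) ≤ ENNReal.ofReal (Ψ a / (anorm a : ℝ)) := by
            have h2 := BA_diam_cube_le (ι := Fin m × Fin n) hs0.le k
            rwa [hcard, hKsa a ha1] at h2
          have h2 : (EMetric.diam (cube (sa a) k)).toReal ≤ Ψ a / (anorm a : ℝ) :=
            ENNReal.toReal_le_of_le_ofReal (by positivity) h1
          rw [hmfun]
          apply ENNReal.ofReal_le_ofReal
          exact hf.2.1 (Set.mem_Ici.mpr ENNReal.toReal_nonneg)
            (Set.mem_Ici.mpr (by positivity)) h2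
        have hcount := BA_matrix_count (m := m) hn hKn hK1 ha1 hψ hψ1
          (show sa a = Ψ a / ((anorm a : ℝ) * K) from by simp only [hsa])
          (show Ma a = ⌈1/(sa a)⌉₊ from by simp only [hMa]) b
        have hfg : f (Ψ a / (anorm a : ℝ))
            = g (Ψ a / (anorm a : ℝ)) * ((Ψ a / (anorm a : ℝ)))^((n-1)*m) := by
          have hr : 0 < Ψ a / (anorm a : ℝ) := by positivity
          rw [hgdef _ hr]
          field_simp
        have hnum := BA_numeric (m := m) (M := Ma a) hn hKn hK1 ha1 hψ hψ1
          (by simp only [hMa, hsa]) hfg (hg.2.2.1 _ (by positivity))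
        calc (∑' k, mfun (EMetric.diam (t N (a, k))))
            = ∑ k ∈ T a, mfun (EMetric.diam (cube (sa a) k)) := hsum1
          _ ≤ ∑ _k ∈ T a, ENNReal.ofReal (f (Ψ a / (anorm a : ℝ))) := Finset.sum_le_sum hdiamle
          _ = ((T a).card : ℝ≥0∞) * ENNReal.ofReal (f (Ψ a / (anorm a : ℝ))) := by
              rw [Finset.sum_const, nsmul_eq_mul]
          _ ≤ (((Ma a ^ (n-1) * ((8*K+1)*(7*anorm a)))^m : ℕ) : ℝ≥0∞)
              * ENNReal.ofReal (f (Ψ a / (anorm a : ℝ))) := by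
              exact mul_le_mul_left (Nat.cast_le.mpr hcount) _
          _ = ENNReal.ofReal ((((Ma a ^ (n-1) * ((8*K+1)*(7*anorm a)))^m : ℕ) : ℝ)
              * f (Ψ a / (anorm a : ℝ))) := by
              rw [← ENNReal.ofReal_natCast, ← ENNReal.ofReal_mul (by positivity)]
          _ ≤ ENNReal.ofReal ((((2*(K:ℝ))^(n-1) * ((8*(K:ℝ)+1)*7))^m)
              * (g (Ψ a / (anorm a : ℝ)) * (anorm a : ℝ)^m)) :=
              ENNReal.ofReal_le_ofReal hnum
          _ = C * ENNReal.ofReal (g (Ψ a / (anorm a : ℝ)) * (anorm a : ℝ)^m) := by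
              rw [hC, ← ENNReal.ofReal_mul (by positivity)]
      · have hψ0 : Ψ a = 0 := le_antisymm (not_lt.mp hψ) (hΨ0 a)
        have hTa : T a = ∅ := by
          simp only [hT]
          rw [Finset.filter_eq_empty_iff]
          intro k _
          rintro ⟨X, -, hXd⟩
          have h1 := hXd ⟨0, hm⟩
          have h0 := BA_intDist_nonneg ((∑ i, (a i : ℝ) * X (⟨0, hm⟩, i)) - b ⟨0, hm⟩)
          rw [hψ0] at h1
          linarith
        have hz : ∀ k : Fin m × Fin n → ℤ, mfun (EMetric.diam (t N (a, k))) = 0 := by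
          intro k
          simp only [ht]
          rw [if_neg (by rw [hTa]; rintro ⟨-, hk⟩; exact absurd hk (Finset.notMem_empty k)),
            EMetric.diam, Metric.ediam_empty, hmfun]
          simp [hf0]
        rw [tsum_congr hz]
        simp
    · have hempty : ∀ k : Fin m × Fin n → ℤ, t N (a, k) = ∅ := by
        intro k
        simp only [ht]
        exact if_neg (fun hcon => hN hcon.1)
      have hz : ∀ k : Fin m × Fin n → ℤ, mfun (EMetric.diam (t N (a, k))) = 0 := by
        intro k
        rw [hempty k, EMetric.diam, Metric.ediam_empty, hmfun]
        simp [hf0]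
      rw [tsum_congr hz]
      simp
  -- tail tends to zero
  have htail : Tendsto (fun N => ∑' a1, Set.indicator {a1 : Fin n → ℤ | Φ N ≤ anorm a1} F a1)
      atTop (𝓝 0) := by
    rw [ENNReal.tendsto_atTop_zero]
    intro ε hε
    obtain ⟨fs, hfs⟩ :=
      ((ENNReal.tendsto_tsum_compl_atTop_zero hFsum).eventually_lt_const hε).exists
    refine ⟨(fs.sup anorm) + 1, fun N hNN => ?_⟩
    have hsub : {a1 : Fin n → ℤ | Φ N ≤ anorm a1} ⊆ {x | x ∉ fs} := by
      intro a haa hafs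
      have h1 : anorm a ≤ fs.sup anorm := Finset.le_sup hafs
      have h2 := hΦN N
      have h3 : Φ N ≤ anorm a := haa
      omega
    calc ∑' a1, Set.indicator {a1 : Fin n → ℤ | Φ N ≤ anorm a1} F a1
        ≤ ∑' a1, Set.indicator {x | x ∉ fs} F a1 :=
          ENNReal.tsum_le_tsum fun a1 =>
            Set.indicator_le_indicator_of_subset hsub (fun _ => zero_le) a1
      _ = ∑' (x : {x : Fin n → ℤ | x ∉ fs}), F x := (tsum_subtype _ F).symm
      _ ≤ ε := le_of_lt hfs
  have hCne : C ≠ ⊤ := by rw [hC]; exact ENNReal.ofReal_ne_top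
  have hlim : Tendsto (fun N => C * ∑' a1, Set.indicator {a1 : Fin n → ℤ | Φ N ≤ anorm a1} F a1)
      atTop (𝓝 0) := by
    have h1 := ENNReal.Tendsto.const_mul htail (Or.inr hCne)
    simpa using h1
  have hliminf : Filter.liminf (fun N => ∑' p : (Fin n → ℤ) × (Fin m × Fin n → ℤ),
      mfun (EMetric.diam (t N p))) atTop ≤ 0 := by
    calc Filter.liminf (fun N => ∑' p : (Fin n → ℤ) × (Fin m × Fin n → ℤ),
        mfun (EMetric.diam (t N p))) atTop
        ≤ Filter.liminf (fun N => C * ∑' a1,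
            Set.indicator {a1 : Fin n → ℤ | Φ N ≤ anorm a1} F a1) atTop :=
          Filter.liminf_le_liminf (Filter.Eventually.of_forall hsum)
      _ = 0 := hlim.liminf_eq
  have hfinal : hMeasure (X := EuclideanSpace ℝ (Fin m × Fin n)) f (W n m b Ψ) ≤ 0 :=
    le_trans hmk hliminf
  exact le_antisymm hfinal zero_le
end

section
/- Fix b ∈ ℝ^m and let Ψ : ℤ^n → ℝ⁺ satisfy Ψ(a) → 0 as |a| → ∞, with n + m > 2. Let δ > 0 and s := (n−1)m + δ. If Σ_{a ∈ ℤ^n \ {0}} Ψ(a)^δ |a|^{m−δ} < ∞, then H^s(W_{n,m}^b(Ψ)) = 0. -/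
open MeasureTheory Set Filter
open scoped Topology
open scoped ENNReal

/-- One approximation set. -/
def Aset (n m : ℕ) (b : Fin m → ℝ) (ψ : ℝ) (a : Fin n → ℤ) :
    Set (EuclideanSpace ℝ (Fin m × Fin n)) :=
  {X | (∀ ji, X ji ∈ Set.Ico (0:ℝ) 1) ∧
    ∀ j, intDist ((∑ i, (a i : ℝ) * X (j, i)) - b j) < ψ}

/-- Covering cell. -/
def tset (n m : ℕ) (b : Fin m → ℝ) (ψ ρ : ℝ) (a : Fin n → ℤ) (i₀ : Fin n)
    (pg : (Fin m → ℤ) × (Fin m → Fin n → ℤ)) : Set (EuclideanSpace ℝ (Fin m × Fin n)) :=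
  {X | (∀ ji, X ji ∈ Set.Ico (0:ℝ) 1) ∧ (∀ j, pg.2 j i₀ = 0) ∧
    ∀ j, |(∑ i, (a i : ℝ) * X (j, i)) - b j - pg.1 j| < ψ ∧
      ∀ i, i ≠ i₀ → X (j, i) ∈ Set.Icc (pg.2 j i * ρ) ((pg.2 j i + 1) * ρ)}

noncomputable def Fidx (n m : ℕ) (P G : ℤ) (i₀ : Fin n) : Finset ((Fin m → ℤ) × (Fin m → Fin n → ℤ)) :=
  (Fintype.piFinset fun _ => Finset.Icc (-P) P) ×ˢ
    Fintype.piFinset fun _ => Fintype.piFinset fun i =>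
      if i = i₀ then ({0} : Finset ℤ) else Finset.Icc (-1) G

lemma Aset_subset_iUnion {n m : ℕ} (b : Fin m → ℝ) {ψ ρ : ℝ} (hρ : 0 < ρ)
    (a : Fin n → ℤ) (i₀ : Fin n) :
    Aset n m b ψ a ⊆ ⋃ pg, tset n m b ψ ρ a i₀ pg := by
  rintro X ⟨hbox, happ⟩
  refine Set.mem_iUnion.2 ⟨⟨fun j => round ((∑ i, (a i : ℝ) * X (j, i)) - b j),
    fun j i => if i = i₀ then 0 else ⌊X (j, i) / ρ⌋⟩, hbox, fun j => if_pos rfl, fun j => ?_⟩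
  refine ⟨happ j, fun i hi => ?_⟩
  simp only [if_neg hi]
  constructor
  · calc (⌊X (j, i) / ρ⌋ : ℝ) * ρ ≤ (X (j, i) / ρ) * ρ :=
        mul_le_mul_of_nonneg_right (Int.floor_le _) hρ.le
    _ = X (j, i) := div_mul_cancel₀ _ hρ.ne'
  · calc X (j, i) = (X (j, i) / ρ) * ρ := (div_mul_cancel₀ _ hρ.ne').symm
    _ ≤ ((⌊X (j, i) / ρ⌋ : ℝ) + 1) * ρ :=
        mul_le_mul_of_nonneg_right (Int.lt_floor_add_one _).le hρ.le
  

lemma tset_diam {n m : ℕ} (b : Fin m → ℝ) {ψ ρ : ℝ} (hρ : 0 ≤ ρ)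
    {a : Fin n → ℤ} {i₀ : Fin n} (hi₀ : anorm a = (a i₀).natAbs) (hK : 1 ≤ anorm a)
    (hψρ : ψ ≤ anorm a * ρ) (pg : (Fin m → ℤ) × (Fin m → Fin n → ℤ)) :
    EMetric.diam (tset n m b ψ ρ a i₀ pg) ≤
      ENNReal.ofReal (Real.sqrt (n * m) * ((n + 2) * ρ)) := by
  have hK : (1 : ℝ) ≤ (anorm a : ℝ) := by exact_mod_cast hK
  have hKpos : (0 : ℝ) < (anorm a : ℝ) := lt_of_lt_of_le one_pos hK
  have hai : ∀ i, |(a i : ℝ)| ≤ (anorm a : ℝ) := fun i => by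
    rw [← Int.cast_abs, Int.abs_eq_natAbs]
    exact_mod_cast Finset.le_sup (f := fun i => (a i).natAbs) (Finset.mem_univ i)
  have hai₀ : |(a i₀ : ℝ)| = (anorm a : ℝ) := by
    rw [hi₀, Nat.cast_natAbs, Int.cast_abs]
  refine EMetric.diam_le fun X hX Y hY => ?_
  obtain ⟨hbX, hg0, hX'⟩ := hX
  obtain ⟨hbY, -, hY'⟩ := hY
  rw [edist_dist]
  refine ENNReal.ofReal_le_ofReal ?_
  have hcoord : ∀ j i, |X (j, i) - Y (j, i)| ≤ (n + 2) * ρ := by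
    intro j i
    by_cases hi : i = i₀
    · rw [hi]
      have hsX : ∀ Z : EuclideanSpace ℝ (Fin m × Fin n),
          ∑ i, (a i : ℝ) * Z (j, i) =
            (a i₀ : ℝ) * Z (j, i₀) + ∑ i ∈ Finset.univ.erase i₀, (a i : ℝ) * Z (j, i) :=
        fun Z => (Finset.add_sum_erase _ _ (Finset.mem_univ i₀)).symm
      have h1 := (hX' j).1
      have h2 := (hY' j).1
      have herase : ∀ i ∈ Finset.univ.erase i₀, |(a i : ℝ) * (X (j, i) - Y (j, i))| ≤
          (anorm a : ℝ) * ρ := by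
        intro i hi'
        have hne := Finset.ne_of_mem_erase hi'
        obtain ⟨hx1, hx2⟩ := (hX' j).2 i hne
        obtain ⟨hy1, hy2⟩ := (hY' j).2 i hne
        have : |X (j, i) - Y (j, i)| ≤ ρ := by rw [abs_le]; constructor <;> linarith
        rw [abs_mul]
        exact mul_le_mul (hai i) this (abs_nonneg _) (Nat.cast_nonneg _)
      have hkey : |(a i₀ : ℝ) * (X (j, i₀) - Y (j, i₀))| ≤
          2 * ψ + (n : ℝ) * ((anorm a : ℝ) * ρ) := by
        have heq : (a i₀ : ℝ) * (X (j, i₀) - Y (j, i₀)) =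
            ((∑ i, (a i : ℝ) * X (j, i)) - b j - pg.1 j)
            - ((∑ i, (a i : ℝ) * Y (j, i)) - b j - pg.1 j)
            - ∑ i ∈ Finset.univ.erase i₀, (a i : ℝ) * (X (j, i) - Y (j, i)) := by
          have hsub : ∑ i ∈ Finset.univ.erase i₀, (a i : ℝ) * (X (j, i) - Y (j, i)) =
              (∑ i ∈ Finset.univ.erase i₀, (a i : ℝ) * X (j, i))
              - ∑ i ∈ Finset.univ.erase i₀, (a i : ℝ) * Y (j, i) := by
            rw [← Finset.sum_sub_distrib]
            exact Finset.sum_congr rfl fun i _ => by ring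
          rw [hsX X, hsX Y, hsub]
          ring
        rw [heq]
        have hsum : |∑ i ∈ Finset.univ.erase i₀, (a i : ℝ) * (X (j, i) - Y (j, i))| ≤
            (n : ℝ) * ((anorm a : ℝ) * ρ) := by
          calc |∑ i ∈ Finset.univ.erase i₀, (a i : ℝ) * (X (j, i) - Y (j, i))|
              ≤ ∑ i ∈ Finset.univ.erase i₀, |(a i : ℝ) * (X (j, i) - Y (j, i))| :=
                Finset.abs_sum_le_sum_abs _ _
            _ ≤ ∑ _i ∈ Finset.univ.erase i₀, (anorm a : ℝ) * ρ :=
                Finset.sum_le_sum herase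
            _ = (Finset.univ.erase i₀).card * ((anorm a : ℝ) * ρ) := by
                rw [Finset.sum_const, nsmul_eq_mul]
            _ ≤ (n : ℝ) * ((anorm a : ℝ) * ρ) := by
                refine mul_le_mul_of_nonneg_right ?_ (by positivity)
                have hcard : ((Finset.univ : Finset (Fin n)).erase i₀).card ≤ n := by
                  simpa using Finset.card_le_card (Finset.erase_subset i₀ Finset.univ)
                exact_mod_cast hcard
        calc |_| ≤ |((∑ i, (a i : ℝ) * X (j, i)) - b j - pg.1 j)
              - ((∑ i, (a i : ℝ) * Y (j, i)) - b j - pg.1 j)|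
              + |∑ i ∈ Finset.univ.erase i₀, (a i : ℝ) * (X (j, i) - Y (j, i))| :=
            abs_sub _ _
          _ ≤ (|(∑ i, (a i : ℝ) * X (j, i)) - b j - pg.1 j|
              + |(∑ i, (a i : ℝ) * Y (j, i)) - b j - pg.1 j|)
              + (n : ℝ) * ((anorm a : ℝ) * ρ) := add_le_add (abs_sub _ _) hsum
          _ ≤ 2 * ψ + (n : ℝ) * ((anorm a : ℝ) * ρ) := by linarith
      rw [abs_mul, hai₀] at hkey
      have hρ' : (0:ℝ) ≤ (anorm a : ℝ) * ρ := by positivity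
      have : (anorm a : ℝ) * |X (j, i₀) - Y (j, i₀)| ≤
          (anorm a : ℝ) * ((n + 2) * ρ) := by
        calc (anorm a : ℝ) * |X (j, i₀) - Y (j, i₀)| ≤
            2 * ψ + (n : ℝ) * ((anorm a : ℝ) * ρ) := hkey
          _ ≤ 2 * ((anorm a : ℝ) * ρ) + (n : ℝ) * ((anorm a : ℝ) * ρ) := by linarith
          _ = (anorm a : ℝ) * ((n + 2) * ρ) := by ring
      exact le_of_mul_le_mul_left this hKpos
    · obtain ⟨hx1, hx2⟩ := (hX' j).2 i hi
      obtain ⟨hy1, hy2⟩ := (hY' j).2 i hi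
      have h1 : |X (j, i) - Y (j, i)| ≤ ρ := by rw [abs_le]; constructor <;> linarith
      calc |X (j, i) - Y (j, i)| ≤ ρ := h1
        _ ≤ (n + 2) * ρ := by nlinarith [Nat.cast_nonneg (α := ℝ) n]
  rw [EuclideanSpace.dist_eq]
  have hb1 : ∑ ji : Fin m × Fin n, dist (X ji) (Y ji) ^ 2 ≤
      (n * m : ℝ) * ((n + 2) * ρ) ^ 2 := by
    calc ∑ ji : Fin m × Fin n, dist (X ji) (Y ji) ^ 2
        ≤ ∑ _ji : Fin m × Fin n, ((n + 2) * ρ) ^ 2 := by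
          refine Finset.sum_le_sum fun ji _ => ?_
          have := hcoord ji.1 ji.2
          rw [Real.dist_eq]
          have h0 : (0:ℝ) ≤ |X ji - Y ji| := abs_nonneg _
          nlinarith [this]
      _ = (n * m : ℝ) * ((n + 2) * ρ) ^ 2 := by
          rw [Finset.sum_const, nsmul_eq_mul, Finset.card_univ, Fintype.card_prod,
            Fintype.card_fin, Fintype.card_fin]
          push_cast; ring
  calc Real.sqrt (∑ ji : Fin m × Fin n, dist (X ji) (Y ji) ^ 2)
      ≤ Real.sqrt ((n * m : ℝ) * ((n + 2) * ρ) ^ 2) := Real.sqrt_le_sqrt hb1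
    _ = Real.sqrt (n * m) * ((n + 2) * ρ) := by
        rw [Real.sqrt_mul (by positivity), Real.sqrt_sq (by positivity)]

lemma tset_empty {n m : ℕ} (hm : 0 < m) (b : Fin m → ℝ) {ψ : ℝ} (ρ : ℝ) (hψ : ψ ≤ 0)
    (a : Fin n → ℤ) (i₀ : Fin n) (pg : (Fin m → ℤ) × (Fin m → Fin n → ℤ)) :
    tset n m b ψ ρ a i₀ pg = ∅ := by
  ext X
  simp only [tset, Set.mem_setOf_eq, Set.mem_empty_iff_false, iff_false]
  rintro ⟨-, -, h⟩
  exact absurd ((h ⟨0, hm⟩).1.trans_le hψ) (not_lt.2 (abs_nonneg _))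

lemma tset_support {n m : ℕ} {b : Fin m → ℝ} {ψ ρ : ℝ} (hρ : 0 < ρ) (hψ1 : ψ ≤ 1)
    {a : Fin n → ℤ} {i₀ : Fin n} {B : ℝ} (hB : ∀ j, |b j| ≤ B) {P G : ℤ}
    (hP : (n : ℝ) * anorm a + B + 1 ≤ (P : ℝ)) (hG : 1 / ρ ≤ (G : ℝ))
    {pg : (Fin m → ℤ) × (Fin m → Fin n → ℤ)}
    (hne : (tset n m b ψ ρ a i₀ pg).Nonempty) : pg ∈ Fidx n m P G i₀ := by
  obtain ⟨X, hbox, hg0, h⟩ := hne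
  have hX : ∀ ji, |X ji| ≤ 1 := fun ji => by
    have := hbox ji; rw [abs_le]; constructor <;> [linarith [this.1]; linarith [this.2]]
  have hai : ∀ i, |(a i : ℝ)| ≤ (anorm a : ℝ) := fun i => by
    rw [← Int.cast_abs, Int.abs_eq_natAbs]
    exact_mod_cast Finset.le_sup (f := fun i => (a i).natAbs) (Finset.mem_univ i)
  rw [Fidx, Finset.mem_product]
  constructor
  · rw [Fintype.mem_piFinset]
    intro j
    have h1 : |(∑ i, (a i : ℝ) * X (j, i)) - b j - pg.1 j| < ψ := (h j).1
    have h2 : |(∑ i, (a i : ℝ) * X (j, i))| ≤ (n : ℝ) * anorm a := by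
      calc |(∑ i, (a i : ℝ) * X (j, i))| ≤ ∑ i, |(a i : ℝ) * X (j, i)| :=
            Finset.abs_sum_le_sum_abs _ _
        _ ≤ ∑ _i : Fin n, (anorm a : ℝ) := by
            refine Finset.sum_le_sum fun i _ => ?_
            rw [abs_mul]
            calc |(a i : ℝ)| * |X (j, i)| ≤ (anorm a : ℝ) * 1 :=
                  mul_le_mul (hai i) (hX _) (abs_nonneg _) (Nat.cast_nonneg _)
              _ = _ := mul_one _
        _ = (n : ℝ) * anorm a := by simp [mul_comm]
    have h3 : |(pg.1 j : ℝ)| ≤ (P : ℝ) := by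
      have hb := hB j
      have key : |(pg.1 j : ℝ)| ≤ |(∑ i, (a i : ℝ) * X (j, i)) - b j|
          + |(∑ i, (a i : ℝ) * X (j, i)) - b j - pg.1 j| := by
        have := abs_sub ((∑ i, (a i : ℝ) * X (j, i)) - b j)
          ((∑ i, (a i : ℝ) * X (j, i)) - b j - pg.1 j)
        have heq : ((∑ i, (a i : ℝ) * X (j, i)) - b j) -
            ((∑ i, (a i : ℝ) * X (j, i)) - b j - pg.1 j) = pg.1 j := by ring
        rwa [heq] at this
      have habs : |(∑ i, (a i : ℝ) * X (j, i)) - b j| ≤ (n : ℝ) * anorm a + B := by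
        calc |(∑ i, (a i : ℝ) * X (j, i)) - b j| ≤ |(∑ i, (a i : ℝ) * X (j, i))| + |b j| :=
              abs_sub _ _
          _ ≤ (n : ℝ) * anorm a + B := add_le_add h2 hb
      linarith
    rw [Finset.mem_Icc]
    rw [abs_le] at h3
    refine ⟨?_, ?_⟩
    · exact_mod_cast h3.1
    · exact_mod_cast h3.2
  · rw [Fintype.mem_piFinset]
    intro j
    rw [Fintype.mem_piFinset]
    intro i
    by_cases hi : i = i₀
    · subst hi; simp [hg0 j]
    · rw [if_neg hi, Finset.mem_Icc]
      obtain ⟨hlo, hhi⟩ := (h j).2 i hi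
      have hx := hbox (j, i)
      constructor
      · by_contra hc
        push_neg at hc
        have h1' : ((pg.2 j i : ℝ) + 1) ≤ -1 := by exact_mod_cast (by omega : pg.2 j i + 1 ≤ -1)
        nlinarith [hx.1, hhi, hρ]
      · by_contra hc
        push_neg at hc
        have hG1 : (G : ℝ) + 1 ≤ (pg.2 j i : ℝ) := by exact_mod_cast hc
        have : (pg.2 j i : ℝ) * ρ < 1 := lt_of_le_of_lt hlo hx.2
        have h1ρ : 1 ≤ (G : ℝ) * ρ := by
          rw [div_le_iff₀ hρ] at hG
          linarith [hG]
        nlinarith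

lemma card_Fidx {n m : ℕ} {P G : ℤ} (i₀ : Fin n) :
    (Fidx n m P G i₀).card = (2 * P + 1).toNat ^ m * (G + 2).toNat ^ ((n-1) * m) := by
  have hinner : (Fintype.piFinset fun i : Fin n =>
      if i = i₀ then ({0} : Finset ℤ) else Finset.Icc (-1) G).card = (G + 2).toNat ^ (n - 1) := by
    rw [Fintype.card_piFinset, ← Finset.prod_erase_mul _ _ (Finset.mem_univ i₀), if_pos rfl,
      Finset.card_singleton, mul_one]
    rw [Finset.prod_congr rfl (fun i hi => by
      rw [if_neg (Finset.ne_of_mem_erase hi), Int.card_Icc,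
        show G + 1 - -1 = G + 2 by ring]), Finset.prod_const,
      Finset.card_erase_of_mem (Finset.mem_univ i₀), Finset.card_univ, Fintype.card_fin]
  rw [Fidx, Finset.card_product, Fintype.card_piFinset, Fintype.card_piFinset]
  simp only [hinner, Int.card_Icc, show P + 1 - -P = 2 * P + 1 by ring, Finset.prod_const,
    Finset.card_univ, Fintype.card_fin, ← pow_mul]

lemma tsum_tset_le {n m : ℕ} (hn : 0 < n) (hm : 0 < m) {b : Fin m → ℝ} {β : ℕ}
    (hB : ∀ j, |b j| ≤ (β : ℝ))
    {δ s : ℝ} (hδ : 0 < δ) (hs : s = ((n : ℝ) - 1) * m + δ)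
    {a : Fin n → ℤ} {i₀ : Fin n} (hi₀ : anorm a = (a i₀).natAbs) (hK : 1 ≤ anorm a)
    {ψ : ℝ} (hψ0 : 0 ≤ ψ) (hψh : ψ ≤ 1 / 2) :
    ∑' pg : (Fin m → ℤ) × (Fin m → Fin n → ℤ),
      EMetric.diam (tset n m b ψ (ψ / anorm a) a i₀ pg) ^ s ≤
    ENNReal.ofReal ((2 * (n : ℝ) + 2 * β + 3) ^ m * 3 ^ ((n - 1) * m)
        * (Real.sqrt (n * m) * (n + 2)) ^ s)
      * ENNReal.ofReal (ψ ^ δ * (anorm a : ℝ) ^ ((m : ℝ) - δ)) := by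
  have hq : ((n - 1) * m : ℕ) = (((n : ℝ) - 1) * m : ℝ) := by
    push_cast [Nat.cast_sub hn]; ring
  have hspos : 0 < s := by
    rw [hs]; nlinarith [hq ▸ (Nat.cast_nonneg (α := ℝ) ((n - 1) * m))]
  rcases eq_or_lt_of_le hψ0 with hψz | hψpos
  · simp [EMetric.diam, tset_empty hm b _ (le_of_eq hψz.symm) a i₀, ENNReal.zero_rpow_of_pos hspos]
  set K : ℝ := (anorm a : ℝ) with hKdef
  have hK1 : (1 : ℝ) ≤ K := by rw [hKdef]; exact_mod_cast hK
  have hKpos : (0 : ℝ) < K := lt_of_lt_of_le one_pos hK1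
  set ρ : ℝ := ψ / K with hρdef
  have hρpos : 0 < ρ := div_pos hψpos hKpos
  set P : ℤ := n * anorm a + β + 1 with hPdef
  set G : ℤ := ⌈1 / ρ⌉ with hGdef
  have hG0 : 0 ≤ G := Int.ceil_nonneg (by positivity)
  have hzero : ∀ pg ∉ Fidx n m P G i₀,
      EMetric.diam (tset n m b ψ ρ a i₀ pg) ^ s = 0 := by
    intro pg hpg
    have hempty : tset n m b ψ ρ a i₀ pg = ∅ := by
      by_contra h
      exact hpg (tset_support hρpos (by linarith) hB
        (by rw [hPdef]; push_cast; linarith) (Int.le_ceil _)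
        (Set.nonempty_iff_ne_empty.2 h))
    rw [hempty, EMetric.diam, Metric.ediam_empty, ENNReal.zero_rpow_of_pos hspos]
  rw [tsum_eq_sum hzero]
  set D : ℝ := Real.sqrt (n * m) * ((n + 2) * ρ) with hDdef
  have hD0 : 0 ≤ D := by positivity
  have hdiam : ∀ pg ∈ Fidx n m P G i₀,
      EMetric.diam (tset n m b ψ ρ a i₀ pg) ^ s ≤ ENNReal.ofReal D ^ s := fun pg _ =>
    ENNReal.rpow_le_rpow (tset_diam b hρpos.le hi₀ hK (le_of_eq (by rw [hρdef]; field_simp; exact hKdef)) pg) hspos.le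
  calc ∑ pg ∈ Fidx n m P G i₀, EMetric.diam (tset n m b ψ ρ a i₀ pg) ^ s
      ≤ ∑ _pg ∈ Fidx n m P G i₀, ENNReal.ofReal D ^ s := Finset.sum_le_sum hdiam
    _ = ((Fidx n m P G i₀).card : ℝ≥0∞) * ENNReal.ofReal D ^ s := by
        rw [Finset.sum_const, nsmul_eq_mul]
    _ = ENNReal.ofReal (((Fidx n m P G i₀).card : ℝ) * D ^ s) := by
        rw [ENNReal.ofReal_rpow_of_nonneg hD0 hspos.le, ENNReal.ofReal_mul (by positivity),
          ENNReal.ofReal_natCast]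
    _ ≤ ENNReal.ofReal (((2 * (n : ℝ) + 2 * β + 3) ^ m * 3 ^ ((n - 1) * m)
          * (Real.sqrt (n * m) * (n + 2)) ^ s) * (ψ ^ δ * K ^ ((m : ℝ) - δ))) := by
        refine ENNReal.ofReal_le_ofReal ?_
        set q : ℕ := (n - 1) * m with hqdef
        set A1 : ℝ := 2 * (n : ℝ) + 2 * β + 3 with hA1def
        set c : ℝ := Real.sqrt (n * m) * (n + 2) with hcdef
        have hsq : s = (q : ℝ) + δ := by rw [hs, ← hq]
        have hcard : ((Fidx n m P G i₀).card : ℝ) ≤ (A1 * K) ^ m * (3 * (K / ψ)) ^ q := by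
          rw [card_Fidx i₀]
          have hP0 : (0 : ℤ) ≤ 2 * P + 1 := by rw [hPdef]; positivity
          have hG20 : (0 : ℤ) ≤ G + 2 := by omega
          push_cast [Int.toNat_of_nonneg hP0, Int.toNat_of_nonneg hG20]
          have hcast1 : (((2 * P + 1).toNat : ℕ) : ℝ) = 2 * (P : ℝ) + 1 := by
            exact_mod_cast congrArg (Int.cast : ℤ → ℝ) (Int.toNat_of_nonneg hP0)
          have hcast2 : (((G + 2).toNat : ℕ) : ℝ) = (G : ℝ) + 2 := by
            exact_mod_cast congrArg (Int.cast : ℤ → ℝ) (Int.toNat_of_nonneg hG20)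
          rw [hcast1, hcast2]
          have hx : 2 * (P : ℝ) + 1 ≤ A1 * K := by
            rw [hPdef, hA1def]
            push_cast
            rw [← hKdef]
            nlinarith [hK1, Nat.cast_nonneg (α := ℝ) n, Nat.cast_nonneg (α := ℝ) β]
          have hy : (G : ℝ) + 2 ≤ 3 * (K / ψ) := by
            have h2 : (G : ℝ) < 1 / ρ + 1 := by
              rw [hGdef]; exact_mod_cast Int.ceil_lt_add_one (1 / ρ)
            have h3 : 1 / ρ = K / ψ := by rw [hρdef, one_div_div]
            have h4 : 2 ≤ K / ψ := by
              rw [le_div_iff₀ hψpos]; nlinarith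
            linarith [h3 ▸ h2]
          have hxP : (0 : ℝ) ≤ 2 * (P : ℝ) + 1 := by exact_mod_cast hP0
          have hyG : (0 : ℝ) ≤ (G : ℝ) + 2 := by exact_mod_cast hG20
          exact mul_le_mul (pow_le_pow_left₀ hxP hx m)
            (pow_le_pow_left₀ hyG hy q) (by positivity) (by positivity)
        have e0 : ρ ^ s = ρ ^ (q : ℝ) * ρ ^ δ := by rw [hsq, Real.rpow_add hρpos]
        have e1 : D ^ s = c ^ s * (ρ ^ (q : ℝ) * ρ ^ δ) := by
          rw [show D = c * ρ by rw [hDdef, hcdef]; ring,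
            Real.mul_rpow (by positivity) hρpos.le, e0]
        have e2 : (3 * (K / ψ)) ^ q * ρ ^ (q : ℝ) = 3 ^ q := by
          rw [Real.rpow_natCast, ← mul_pow,
            show 3 * (K / ψ) * ρ = 3 by rw [hρdef]; field_simp]
        have e3 : (K : ℝ) ^ m * ρ ^ δ = ψ ^ δ * K ^ ((m : ℝ) - δ) := by
          rw [hρdef, Real.div_rpow hψ0 hKpos.le, Real.rpow_sub hKpos,
            ← Real.rpow_natCast K m]
          ring
        calc ((Fidx n m P G i₀).card : ℝ) * D ^ s
            ≤ ((A1 * K) ^ m * (3 * (K / ψ)) ^ q) * D ^ s :=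
              mul_le_mul_of_nonneg_right hcard (Real.rpow_nonneg hD0 s)
          _ = (A1 ^ m * 3 ^ q * c ^ s) * (ψ ^ δ * K ^ ((m : ℝ) - δ)) := by
              rw [e1, mul_pow, ← e3, ← e2]; ring
    _ = _ := ENNReal.ofReal_mul (by positivity)

set_option maxHeartbeats 2000000 in
theorem stmt7 {n m : ℕ} (hn : 0 < n) (hm : 0 < m) (hnm : 2 < n + m) (b : Fin m → ℝ)
    (Ψ : (Fin n → ℤ) → ℝ) (hΨ0 : ∀ a, 0 ≤ Ψ a)
    (hΨlim : ∀ ε > (0:ℝ), ∃ N : ℕ, ∀ a : Fin n → ℤ, N ≤ anorm a → Ψ a < ε)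
    (δ : ℝ) (hδ : 0 < δ) (s : ℝ) (hs : s = ((n : ℝ) - 1) * m + δ)
    (hconv : ∑' a : {a : Fin n → ℤ // a ≠ 0},
        ENNReal.ofReal (Ψ a.1 ^ δ * (anorm a.1 : ℝ) ^ ((m : ℝ) - δ)) ≠ ⊤) :
    μH[s] (W n m b Ψ) = 0 := by
  classical
  haveI : NeZero n := ⟨hn.ne'⟩
  obtain ⟨β, hβ⟩ : ∃ β : ℕ, ∀ j, |b j| ≤ (β : ℝ) :=
    ⟨⌈∑ j, |b j|⌉₊, fun j => le_trans
      (Finset.single_le_sum (f := fun j => |b j|) (fun _ _ => abs_nonneg _) (Finset.mem_univ j))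
      (Nat.le_ceil _)⟩
  have hi0ex : ∀ a : Fin n → ℤ, ∃ i, anorm a = (a i).natAbs := by
    intro a
    obtain ⟨i, -, h⟩ := Finset.exists_mem_eq_sup (Finset.univ : Finset (Fin n))
      Finset.univ_nonempty (fun i => (a i).natAbs)
    exact ⟨i, h⟩
  choose i0 hi0 using hi0ex
  set f : (Fin n → ℤ) → ℝ≥0∞ := fun a =>
    if a = 0 then 0 else ENNReal.ofReal (Ψ a ^ δ * (anorm a : ℝ) ^ ((m : ℝ) - δ)) with hf
  have hfsum : ∑' a, f a ≠ ⊤ := by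
    have h1 : ∑' a : {a : Fin n → ℤ // a ≠ 0}, f a.1 = ∑' a, f a :=
      tsum_subtype_eq_of_support_subset (fun a ha h => ha (by simp [hf, h]))
    rw [← h1]
    have h2 : ∀ a : {a : Fin n → ℤ // a ≠ 0},
        f a.1 = ENNReal.ofReal (Ψ a.1 ^ δ * (anorm a.1 : ℝ) ^ ((m : ℝ) - δ)) :=
      fun a => if_neg a.2
    rw [tsum_congr h2]
    exact hconv
  have hanorm0 : anorm (0 : Fin n → ℤ) = 0 := by simp [anorm]
  have htail : ∀ k : ℕ, ∃ N : ℕ, 1 ≤ N ∧ (∀ a, N ≤ anorm a → Ψ a < 1 / ((k : ℝ) + 2)) ∧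
      (∑' a : {a : Fin n → ℤ // N ≤ anorm a}, f a.1) < ENNReal.ofReal (1 / ((k : ℝ) + 1)) := by
    intro k
    obtain ⟨N₁, hN₁⟩ := hΨlim (1 / ((k : ℝ) + 2)) (by positivity)
    have hpos : (0 : ℝ≥0∞) < ENNReal.ofReal (1 / ((k : ℝ) + 1)) := by
      rw [ENNReal.ofReal_pos]; positivity
    obtain ⟨t₀, ht₀⟩ :=
      ((tendsto_order.1 (ENNReal.tendsto_tsum_compl_atTop_zero hfsum)).2 _ hpos).exists
    refine ⟨max N₁ (max 1 (t₀.sup anorm + 1)), le_trans (by omega) (le_max_right _ _),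
      fun a ha => hN₁ a (le_trans (le_max_left _ _) ha), ?_⟩
    refine lt_of_le_of_lt ?_ ht₀
    have hsub' : ∀ a : {a : Fin n → ℤ // max N₁ (max 1 (t₀.sup anorm + 1)) ≤ anorm a},
        a.1 ∉ t₀ := by
      intro a hmem
      have h1 := Finset.le_sup (f := anorm) hmem
      have h2 := a.2
      omega
    have hinj : Function.Injective
        (fun a : {a : Fin n → ℤ // max N₁ (max 1 (t₀.sup anorm + 1)) ≤ anorm a} =>
          (⟨a.1, hsub' a⟩ : {x : Fin n → ℤ // x ∉ t₀})) := by
      intro a₁ a₂ h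
      simpa [Subtype.ext_iff] using h
    exact ENNReal.tsum_comp_le_tsum_of_injective hinj fun x : {x // x ∉ t₀} => f x.1
  choose N hN1 hNψ hNtail using htail
  set Cst : ℝ := (2 * (n : ℝ) + 2 * β + 3) ^ m * 3 ^ ((n - 1) * m)
      * (Real.sqrt (n * m) * (n + 2)) ^ s with hCst
  set t : ∀ k : ℕ, ({a : Fin n → ℤ // N k ≤ anorm a} ×
      ((Fin m → ℤ) × (Fin m → Fin n → ℤ))) → Set (EuclideanSpace ℝ (Fin m × Fin n)) :=
    fun k api =>
    tset n m b (Ψ api.1.1) (Ψ api.1.1 / anorm api.1.1) api.1.1 (i0 api.1.1) api.2 with htdef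
  set r : ℕ → ℝ≥0∞ := fun k =>
    ENNReal.ofReal (Real.sqrt (n * m) * ((n + 2) * (1 / ((k : ℝ) + 2)))) with hrdef
  have hr : Tendsto r atTop (𝓝 0) := by
    have h1 : Tendsto (fun k : ℕ => 1 / ((k : ℝ) + 2)) atTop (𝓝 0) := by
      refine squeeze_zero (fun k => by positivity) (fun k => ?_)
        tendsto_one_div_add_atTop_nhds_zero_nat
      exact one_div_le_one_div_of_le (by positivity) (by linarith)
    have h2 : Tendsto (fun k : ℕ => Real.sqrt (n * m) * ((n + 2) * (1 / ((k : ℝ) + 2))))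
        atTop (𝓝 0) := by
      have := (tendsto_const_nhds (x := ((n : ℝ) + 2))).mul h1
      rw [mul_zero] at this
      have := (tendsto_const_nhds (x := Real.sqrt (n * m))).mul this
      rwa [mul_zero] at this
    have := ENNReal.tendsto_ofReal h2
    rwa [ENNReal.ofReal_zero] at this
  have ht : ∀ k, ∀ i : {a : Fin n → ℤ // N k ≤ anorm a} ×
      ((Fin m → ℤ) × (Fin m → Fin n → ℤ)), EMetric.diam (t k i) ≤ r k := by
    rintro k ⟨a, pg⟩
    have hK : 1 ≤ anorm a.1 := le_trans (hN1 k) a.2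
    have hKne : ((anorm a.1 : ℝ)) ≠ 0 := by
      have : (1:ℝ) ≤ (anorm a.1 : ℝ) := by exact_mod_cast hK
      linarith
    have hd := tset_diam b (ρ := Ψ a.1 / anorm a.1)
      (div_nonneg (hΨ0 a.1) (Nat.cast_nonneg _)) (hi0 a.1) hK
      ((by rw [mul_div_cancel₀ _ hKne] :
        (anorm a.1 : ℝ) * (Ψ a.1 / (anorm a.1 : ℝ)) = Ψ a.1).symm.le) pg
    refine le_trans hd (ENNReal.ofReal_le_ofReal ?_)
    have hρψ : Ψ a.1 / (anorm a.1 : ℝ) ≤ 1 / ((k : ℝ) + 2) := by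
      have h1 : Ψ a.1 / (anorm a.1 : ℝ) ≤ Ψ a.1 := by
        rw [div_le_iff₀ (by exact_mod_cast hK.trans_lt' zero_lt_one)]
        nlinarith [hΨ0 a.1, (by exact_mod_cast hK : (1:ℝ) ≤ (anorm a.1 : ℝ))]
      exact h1.trans (hNψ k a.1 a.2).le
    exact mul_le_mul_of_nonneg_left
      (mul_le_mul_of_nonneg_left hρψ (by positivity)) (Real.sqrt_nonneg _)
  have hst : ∀ k, W n m b Ψ ⊆ ⋃ i : {a : Fin n → ℤ // N k ≤ anorm a} ×
      ((Fin m → ℤ) × (Fin m → Fin n → ℤ)), t k i := by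
    intro k X hX
    obtain ⟨hbox, hinf⟩ := hX
    have hfin : {a : Fin n → ℤ | anorm a < N k}.Finite := by
      refine Set.Finite.subset (Set.Finite.pi (fun i : Fin n =>
        Set.finite_Icc (-(N k : ℤ)) (N k))) ?_
      intro a ha i _
      have h1 : (a i).natAbs ≤ anorm a :=
        Finset.le_sup (f := fun i => (a i).natAbs) (Finset.mem_univ i)
      have h2 : anorm a < N k := ha
      constructor <;> omega
    obtain ⟨a, haS, hanot⟩ := (hinf.diff hfin).nonempty
    have haN : N k ≤ anorm a := not_lt.1 hanot
    have hψpos : 0 < Ψ a :=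
      lt_of_le_of_lt (abs_nonneg _) (haS ⟨0, hm⟩)
    have hK : 1 ≤ anorm a := le_trans (hN1 k) haN
    have hA : X ∈ Aset n m b (Ψ a) a := ⟨hbox, haS⟩
    have hKpos' : (0:ℝ) < (anorm a : ℝ) := by exact_mod_cast lt_of_lt_of_le zero_lt_one hK
    have hsub := Aset_subset_iUnion b (ρ := Ψ a / anorm a)
      (div_pos hψpos hKpos') a (i0 a) hA
    obtain ⟨pg, hpg⟩ := Set.mem_iUnion.1 hsub
    exact Set.mem_iUnion.2 ⟨(⟨a, haN⟩, pg), hpg⟩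
  have hμ := Measure.hausdorffMeasure_le_liminf_tsum s (W n m b Ψ) r hr t
    (Filter.Eventually.of_forall ht) (Filter.Eventually.of_forall hst)
  have hbound : ∀ k, (∑' i : {a : Fin n → ℤ // N k ≤ anorm a} ×
      ((Fin m → ℤ) × (Fin m → Fin n → ℤ)), EMetric.diam (t k i) ^ s) ≤
      ENNReal.ofReal Cst * ENNReal.ofReal (1 / ((k : ℝ) + 1)) := by
    intro k
    rw [ENNReal.tsum_prod']
    have hinner : ∀ a : {a : Fin n → ℤ // N k ≤ anorm a},
        (∑' pg : (Fin m → ℤ) × (Fin m → Fin n → ℤ),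
          EMetric.diam (t k (a, pg)) ^ s) ≤ ENNReal.ofReal Cst * f a.1 := by
      intro a
      show (∑' pg : (Fin m → ℤ) × (Fin m → Fin n → ℤ),
        EMetric.diam (tset n m b (Ψ a.1) (Ψ a.1 / anorm a.1) a.1 (i0 a.1) pg) ^ s) ≤ _
      have hK : 1 ≤ anorm a.1 := le_trans (hN1 k) a.2
      have hane : a.1 ≠ 0 := fun h => by rw [h, hanorm0] at hK; omega
      have hfa : f a.1 = ENNReal.ofReal (Ψ a.1 ^ δ * (anorm a.1 : ℝ) ^ ((m : ℝ) - δ)) :=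
        if_neg hane
      rw [hfa]
      have hψh : Ψ a.1 ≤ 1 / 2 := by
        refine (hNψ k a.1 a.2).le.trans ?_
        rw [div_le_div_iff₀ (by positivity) (by norm_num)]
        linarith [Nat.cast_nonneg (α := ℝ) k]
      exact tsum_tset_le hn hm hβ hδ hs (hi0 a.1) hK (hΨ0 a.1) hψh
    calc ∑' (a : {a : Fin n → ℤ // N k ≤ anorm a})
          (pg : (Fin m → ℤ) × (Fin m → Fin n → ℤ)), EMetric.diam (t k (a, pg)) ^ s
        ≤ ∑' a : {a : Fin n → ℤ // N k ≤ anorm a}, ENNReal.ofReal Cst * f a.1 :=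
          ENNReal.tsum_le_tsum hinner
      _ = ENNReal.ofReal Cst * ∑' a : {a : Fin n → ℤ // N k ≤ anorm a}, f a.1 :=
          ENNReal.tsum_mul_left
      _ ≤ _ := mul_le_mul_right (hNtail k).le _
  have h0 : Tendsto (fun k : ℕ => ENNReal.ofReal Cst * ENNReal.ofReal (1 / ((k : ℝ) + 1)))
      atTop (𝓝 0) := by
    have h1 : Tendsto (fun k : ℕ => ENNReal.ofReal (1 / ((k : ℝ) + 1))) atTop (𝓝 0) := by
      have := ENNReal.tendsto_ofReal tendsto_one_div_add_atTop_nhds_zero_nat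
      rwa [ENNReal.ofReal_zero] at this
    have := ENNReal.Tendsto.const_mul (a := ENNReal.ofReal Cst) h1 (Or.inr ENNReal.ofReal_ne_top)
    rwa [mul_zero] at this
  refine le_antisymm ?_ zero_le
  calc μH[s] (W n m b Ψ) ≤ liminf (fun k => ∑' i : {a : Fin n → ℤ // N k ≤ anorm a} ×
      ((Fin m → ℤ) × (Fin m → Fin n → ℤ)), EMetric.diam (t k i) ^ s) atTop := hμ
    _ ≤ liminf (fun k : ℕ => ENNReal.ofReal Cst * ENNReal.ofReal (1 / ((k : ℝ) + 1))) atTop :=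
        liminf_le_liminf (Filter.Eventually.of_forall hbound)
    _ = 0 := h0.liminf_eq
end
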